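/- arXiv:2309.12567 — 3 statements merged into one kernel-verified Lean document; each statement's English description precedes it below -/
import Mathlib

section
/- Let f(z,σ) = g(|z|²/4, σ) for a C² function g : ℝ × ℝ^k → ℝ. Then at every point (z,σ), with ξ = |z|²/4, the horizontal ∞-Laplacian satisfies Δ_{H,∞} f(z,σ) = ξ²·Δ_∞ g(ξ,σ) + (ξ/2)·g_ξ(ξ,σ)·|∇g(ξ,σ)|², where ∇g = (g_ξ, ∇_σ g) and Δ_∞ g = (1/2)⟨∇(|∇g|²), ∇g⟩ is the Euclidean ∞-Laplacian of g on ℝ × ℝ^k. -/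
open scoped BigOperators
open Matrix

noncomputable section

variable {m k : ℕ}

/-- The ambient point space ℝ^m × ℝ^k. -/
abbrev Pt (m k : ℕ) := EuclideanSpace ℝ (Fin m) × EuclideanSpace ℝ (Fin k)

/-- H-type (Clifford) condition on the matrices J_ℓ : skew-symmetry and
    J_ℓ J_{ℓ'} + J_{ℓ'} J_ℓ = -2 δ_{ℓℓ'} Id. -/
def HType (J : Fin k → Matrix (Fin m) (Fin m) ℝ) : Prop :=
  (∀ ℓ, (J ℓ)ᵀ = -(J ℓ)) ∧
  ∀ ℓ ℓ', J ℓ * J ℓ' + J ℓ' * J ℓ =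
    (if ℓ = ℓ' then (-2 : ℝ) else 0) • (1 : Matrix (Fin m) (Fin m) ℝ)

/-- Horizontal derivative X_i f(z,σ) = ∂_{z_i} f + (1/2) Σ_ℓ (J_ℓ z)_i ∂_{σ_ℓ} f. -/
def XD (J : Fin k → Matrix (Fin m) (Fin m) ℝ) (f : Pt m k → ℝ) (i : Fin m) (x : Pt m k) : ℝ :=
  fderiv ℝ f x (EuclideanSpace.single i 1, 0)
    + (1/2) * ∑ ℓ : Fin k, (∑ j : Fin m, J ℓ i j * x.1 j) *
        fderiv ℝ f x (0, EuclideanSpace.single ℓ 1)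

/-- Squared length of the horizontal gradient. -/
def hGradSq (J : Fin k → Matrix (Fin m) (Fin m) ℝ) (f : Pt m k → ℝ) (x : Pt m k) : ℝ :=
  ∑ i : Fin m, (XD J f i x) ^ 2

/-- Length of the horizontal gradient. -/
def hGradNorm (J : Fin k → Matrix (Fin m) (Fin m) ℝ) (f : Pt m k → ℝ) (x : Pt m k) : ℝ :=
  Real.sqrt (hGradSq J f x)

/-- Horizontal Laplacian Δ_H f = Σ X_i(X_i f). -/
def hLap (J : Fin k → Matrix (Fin m) (Fin m) ℝ) (f : Pt m k → ℝ) (x : Pt m k) : ℝ :=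
  ∑ i : Fin m, XD J (XD J f i) i x

/-- Horizontal ∞-Laplacian Δ_{H,∞} f = (1/2) Σ X_i(|∇_H f|²) X_i f. -/
def hInfLap (J : Fin k → Matrix (Fin m) (Fin m) ℝ) (f : Pt m k → ℝ) (x : Pt m k) : ℝ :=
  (1/2) * ∑ i : Fin m, XD J (hGradSq J f) i x * XD J f i x

/-- Horizontal p-Laplacian Δ_{H,p} f = Σ X_i(|∇_H f|^{p-2} X_i f). -/
def hPLap (J : Fin k → Matrix (Fin m) (Fin m) ℝ) (p : ℝ) (f : Pt m k → ℝ) (x : Pt m k) : ℝ :=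
  ∑ i : Fin m, XD J (fun y => (hGradSq J f y) ^ ((p - 2) / 2) * XD J f i y) i x

/-- Korányi gauge N(z,σ) = (|z|⁴ + 16|σ|²)^{1/4}. -/
def gaugeN (x : Pt m k) : ℝ := (‖x.1‖ ^ 4 + 16 * ‖x.2‖ ^ 2) ^ ((1 : ℝ)/4)

/-- ∂_ξ g for g : ℝ × ℝ^k → ℝ. -/
def gXi (g : ℝ × EuclideanSpace ℝ (Fin k) → ℝ) (y : ℝ × EuclideanSpace ℝ (Fin k)) : ℝ :=
  fderiv ℝ g y (1, 0)

/-- ∂_{σ_ℓ} g for g : ℝ × ℝ^k → ℝ. -/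
def gS (g : ℝ × EuclideanSpace ℝ (Fin k) → ℝ) (ℓ : Fin k) (y : ℝ × EuclideanSpace ℝ (Fin k)) : ℝ :=
  fderiv ℝ g y (0, EuclideanSpace.single ℓ 1)

/-- |∇ g|² = g_ξ² + |∇_σ g|². -/
def gGradSq (g : ℝ × EuclideanSpace ℝ (Fin k) → ℝ) (y : ℝ × EuclideanSpace ℝ (Fin k)) : ℝ :=
  (gXi g y) ^ 2 + ∑ ℓ : Fin k, (gS g ℓ y) ^ 2

/-- g_{ξξ}. -/
def gXiXi (g : ℝ × EuclideanSpace ℝ (Fin k) → ℝ) (y : ℝ × EuclideanSpace ℝ (Fin k)) : ℝ :=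
  fderiv ℝ (gXi g) y (1, 0)

/-- Δ_σ g. -/
def gLapS (g : ℝ × EuclideanSpace ℝ (Fin k) → ℝ) (y : ℝ × EuclideanSpace ℝ (Fin k)) : ℝ :=
  ∑ ℓ : Fin k, fderiv ℝ (gS g ℓ) y (0, EuclideanSpace.single ℓ 1)

/-- Euclidean ∞-Laplacian Δ_∞ g = (1/2)⟨∇(|∇g|²), ∇g⟩ on ℝ × ℝ^k. -/
def gInf (g : ℝ × EuclideanSpace ℝ (Fin k) → ℝ) (y : ℝ × EuclideanSpace ℝ (Fin k)) : ℝ :=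
  (1/2) * (fderiv ℝ (gGradSq g) y (1, 0) * gXi g y
    + ∑ ℓ : Fin k, fderiv ℝ (gGradSq g) y (0, EuclideanSpace.single ℓ 1) * gS g ℓ y)


/-! ### Auxiliary lemmas -/

lemma skew_apply' {J : Matrix (Fin m) (Fin m) ℝ} (hs : Jᵀ = -J) (i j : Fin m) :
    J j i = - J i j := by
  have := congrFun (congrFun hs i) j
  simpa [Matrix.transpose_apply] using this

lemma sum_z_Jz' {J : Matrix (Fin m) (Fin m) ℝ} (hs : Jᵀ = -J) (z : Fin m → ℝ) :
    ∑ i, z i * (∑ j, J i j * z j) = 0 := by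
  have key : (∑ i, z i * (∑ j, J i j * z j)) = - ∑ i, z i * (∑ j, J i j * z j) := by
    conv_lhs => rw [show (∑ i, z i * (∑ j, J i j * z j)) = ∑ i, ∑ j, z i * (J i j * z j) by
      exact Finset.sum_congr rfl fun i _ => Finset.mul_sum _ _ _]
    rw [Finset.sum_comm]
    have : ∀ i : Fin m, ∀ j : Fin m, z j * (J j i * z i) = -(z i * (J i j * z j)) := by
      intro i j; rw [skew_apply' hs i j]; ring
    calc ∑ i, ∑ j, z j * (J j i * z i) = ∑ i, ∑ j, -(z i * (J i j * z j)) :=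
          Finset.sum_congr rfl fun i _ => Finset.sum_congr rfl fun j _ => this i j
      _ = - ∑ i, ∑ j, z i * (J i j * z j) := by
          simp [Finset.sum_neg_distrib]
      _ = - ∑ i, z i * (∑ j, J i j * z j) := by
          congr 1
          exact Finset.sum_congr rfl fun i _ => (Finset.mul_sum _ _ _).symm
  linarith

lemma sum_Jz_Jz' {J J' : Matrix (Fin m) (Fin m) ℝ} (hs : Jᵀ = -J) (hs' : J'ᵀ = -J')
    {c : ℝ} (hrel : J * J' + J' * J = c • 1) (z : Fin m → ℝ) :
    ∑ i, (∑ j, J i j * z j) * (∑ j, J' i j * z j) = -(c/2) * ∑ j, (z j)^2 := by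
  have hQ : ∀ M : Matrix (Fin m) (Fin m) ℝ,
      (∑ j, ∑ p, z j * z p * M j p) = ∑ j, ∑ p, z j * z p * Mᵀ j p := by
    intro M
    rw [Finset.sum_comm]
    exact Finset.sum_congr rfl fun j _ => Finset.sum_congr rfl fun p _ => by
      rw [Matrix.transpose_apply]; ring
  have h1 : ∑ i, (∑ j, J i j * z j) * (∑ j, J' i j * z j)
      = - ∑ j, ∑ p, z j * z p * (J * J') j p := by
    have e1 : ∀ i : Fin m, (∑ j, J i j * z j) * (∑ j, J' i j * z j)
        = ∑ j, ∑ p, (J i j * z j) * (J' i p * z p) := fun i => Finset.sum_mul_sum _ _ _ _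
    rw [Finset.sum_congr rfl fun i _ => e1 i, Finset.sum_comm]
    rw [show (∑ j, ∑ i, ∑ p, (J i j * z j) * (J' i p * z p))
        = ∑ j, ∑ p, ∑ i, (J i j * z j) * (J' i p * z p) from
      Finset.sum_congr rfl fun j _ => Finset.sum_comm]
    rw [← Finset.sum_neg_distrib]
    apply Finset.sum_congr rfl; intro j _
    rw [← Finset.sum_neg_distrib]
    apply Finset.sum_congr rfl; intro p _
    rw [show -(z j * z p * (J * J') j p) = z j * z p * (-(J * J') j p) by ring]
    rw [Matrix.mul_apply, show (-(∑ i, J j i * J' i p)) = ∑ i, (-(J j i)) * J' i p by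
      rw [← Finset.sum_neg_distrib]; exact Finset.sum_congr rfl fun i _ => by ring]
    rw [Finset.mul_sum]
    apply Finset.sum_congr rfl; intro i _
    rw [skew_apply' hs j i]; ring
  have h2 : (∑ j, ∑ p, z j * z p * (J' * J) j p) = ∑ j, ∑ p, z j * z p * (J * J') j p := by
    rw [hQ (J' * J)]
    apply Finset.sum_congr rfl; intro j _; apply Finset.sum_congr rfl; intro p _
    rw [Matrix.transpose_mul, hs, hs', Matrix.neg_mul, Matrix.mul_neg, neg_neg]
  have h3 : (∑ j, ∑ p, z j * z p * (J * J') j p) + (∑ j, ∑ p, z j * z p * (J' * J) j p)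
      = c * ∑ j, (z j)^2 := by
    rw [← Finset.sum_add_distrib]
    rw [Finset.mul_sum]
    apply Finset.sum_congr rfl; intro j _
    rw [← Finset.sum_add_distrib]
    have hent : ∀ p, (J * J') j p + (J' * J) j p = c * (if j = p then 1 else 0) := by
      intro p
      have := congrFun (congrFun hrel j) p
      simpa [Matrix.add_apply, Matrix.smul_apply, Matrix.one_apply, mul_ite] using this
    calc ∑ p, (z j * z p * (J * J') j p + z j * z p * (J' * J) j p)
        = ∑ p, z j * z p * (c * (if j = p then 1 else 0)) := by
          apply Finset.sum_congr rfl; intro p _; rw [← hent p]; ring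
      _ = c * (z j)^2 := by simp [mul_ite]; ring
  rw [h2] at h3; rw [h1]
  linarith

lemma key_sum' {J : Fin k → Matrix (Fin m) (Fin m) ℝ} (hJ : HType J)
    (z : Fin m → ℝ) (a c : ℝ) (b d : Fin k → ℝ) :
    ∑ i, ((z i / 2) * a + (1/2) * ∑ ℓ, (∑ j, J ℓ i j * z j) * b ℓ)
      * ((z i / 2) * c + (1/2) * ∑ ℓ, (∑ j, J ℓ i j * z j) * d ℓ)
    = ((∑ j, (z j)^2) / 4) * (a * c + ∑ ℓ, b ℓ * d ℓ) := by
  have hww : ∀ ℓ ℓ', (∑ i, (∑ j, J ℓ i j * z j) * (∑ j, J ℓ' i j * z j))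
      = (if ℓ = ℓ' then 1 else 0) * ∑ j, (z j)^2 := by
    intro ℓ ℓ'
    rw [sum_Jz_Jz' (hJ.1 ℓ) (hJ.1 ℓ') (hJ.2 ℓ ℓ') z]
    split_ifs <;> norm_num
  have hzw : ∀ ℓ, (∑ i, z i * (∑ j, J ℓ i j * z j)) = 0 := fun ℓ => sum_z_Jz' (hJ.1 ℓ) z
  have expand : ∀ i : Fin m,
      ((z i / 2) * a + (1/2) * ∑ ℓ, (∑ j, J ℓ i j * z j) * b ℓ)
        * ((z i / 2) * c + (1/2) * ∑ ℓ, (∑ j, J ℓ i j * z j) * d ℓ)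
      = a*c/4 * (z i)^2
        + a/4 * (z i * ∑ ℓ, (∑ j, J ℓ i j * z j) * d ℓ)
        + c/4 * (z i * ∑ ℓ, (∑ j, J ℓ i j * z j) * b ℓ)
        + 1/4 * ((∑ ℓ, (∑ j, J ℓ i j * z j) * b ℓ) * (∑ ℓ, (∑ j, J ℓ i j * z j) * d ℓ)) :=
    fun i => by ring
  rw [Finset.sum_congr rfl fun i _ => expand i]
  rw [Finset.sum_add_distrib, Finset.sum_add_distrib, Finset.sum_add_distrib]
  have t1 : (∑ i, a*c/4 * (z i)^2) = a*c/4 * ∑ j, (z j)^2 := by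
    rw [Finset.mul_sum]
  have tz : ∀ e : Fin k → ℝ, (∑ i, z i * ∑ ℓ, (∑ j, J ℓ i j * z j) * e ℓ) = 0 := by
    intro e
    have : ∀ i : Fin m, z i * (∑ ℓ, (∑ j, J ℓ i j * z j) * e ℓ)
        = ∑ ℓ, (z i * (∑ j, J ℓ i j * z j)) * e ℓ := by
      intro i
      rw [Finset.mul_sum]
      exact Finset.sum_congr rfl fun ℓ _ => by ring
    rw [Finset.sum_congr rfl fun i _ => this i, Finset.sum_comm]
    apply Finset.sum_eq_zero; intro ℓ _
    rw [← Finset.sum_mul, hzw ℓ, zero_mul]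
  have t2 : (∑ i, a/4 * (z i * ∑ ℓ, (∑ j, J ℓ i j * z j) * d ℓ)) = 0 := by
    rw [← Finset.mul_sum, tz d, mul_zero]
  have t3 : (∑ i, c/4 * (z i * ∑ ℓ, (∑ j, J ℓ i j * z j) * b ℓ)) = 0 := by
    rw [← Finset.mul_sum, tz b, mul_zero]
  have t4 : (∑ i, 1/4 * ((∑ ℓ, (∑ j, J ℓ i j * z j) * b ℓ) * (∑ ℓ, (∑ j, J ℓ i j * z j) * d ℓ)))
      = 1/4 * ((∑ ℓ, b ℓ * d ℓ) * ∑ j, (z j)^2) := by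
    rw [← Finset.mul_sum]
    congr 1
    have e1 : ∀ i : Fin m, (∑ ℓ, (∑ j, J ℓ i j * z j) * b ℓ) * (∑ ℓ, (∑ j, J ℓ i j * z j) * d ℓ)
        = ∑ ℓ, ∑ ℓ', ((∑ j, J ℓ i j * z j) * (∑ j, J ℓ' i j * z j)) * (b ℓ * d ℓ') := by
      intro i
      rw [Finset.sum_mul_sum]
      exact Finset.sum_congr rfl fun ℓ _ => Finset.sum_congr rfl fun ℓ' _ => by ring
    rw [Finset.sum_congr rfl fun i _ => e1 i, Finset.sum_comm]
    rw [Finset.sum_congr rfl fun ℓ _ => Finset.sum_comm (γ := Fin m)]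
    have e2 : ∀ ℓ ℓ', (∑ i, ((∑ j, J ℓ i j * z j) * (∑ j, J ℓ' i j * z j)) * (b ℓ * d ℓ'))
        = ((if ℓ = ℓ' then 1 else 0) * ∑ j, (z j)^2) * (b ℓ * d ℓ') := by
      intro ℓ ℓ'
      rw [← Finset.sum_mul, hww ℓ ℓ']
    rw [Finset.sum_congr rfl fun ℓ _ => Finset.sum_congr rfl fun ℓ' _ => e2 ℓ ℓ']
    rw [Finset.sum_mul]
    apply Finset.sum_congr rfl; intro ℓ _
    simp [ite_mul, mul_comm, mul_assoc, mul_left_comm]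
  rw [t1, t2, t3, t4]
  ring

lemma phi_hasFDerivAt' (x : Pt m k) :
    HasFDerivAt (fun p : Pt m k => ((‖p.1‖ ^ 2 / 4 : ℝ), p.2))
      (((((1:ℝ)/4) • ((2:ℕ) • ((innerSL ℝ x.1).comp (ContinuousLinearMap.fst ℝ _ _)))).prod
        (ContinuousLinearMap.snd ℝ _ _))) x := by
  have h1 : HasFDerivAt (fun p : Pt m k => p.1) (ContinuousLinearMap.fst ℝ _ _) x :=
    hasFDerivAt_fst
  have h2 := h1.norm_sq
  have h3 : HasFDerivAt (fun p : Pt m k => ‖p.1‖ ^ 2 / 4)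
      ((((1:ℝ)/4) • ((2:ℕ) • ((innerSL ℝ x.1).comp (ContinuousLinearMap.fst ℝ _ _))))) x := by
    have := h2.const_smul ((1:ℝ)/4)
    exact this.congr_of_eventuallyEq (Filter.Eventually.of_forall fun p => by
      show ‖p.1‖ ^ 2 / 4 = (1/4 : ℝ) * ‖p.1‖ ^ 2
      ring)
  have h4 : HasFDerivAt (fun p : Pt m k => p.2) (ContinuousLinearMap.snd ℝ _ _) x :=
    hasFDerivAt_snd
  exact h3.prodMk h4

lemma fderiv_comp_phi' (h : ℝ × EuclideanSpace ℝ (Fin k) → ℝ)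
    (x : Pt m k) (hh : DifferentiableAt ℝ h (‖x.1‖ ^ 2 / 4, x.2)) (v : Pt m k) :
    fderiv ℝ (fun p : Pt m k => h (‖p.1‖ ^ 2 / 4, p.2)) x v
      = fderiv ℝ h (‖x.1‖ ^ 2 / 4, x.2) ((inner ℝ x.1 v.1 : ℝ) / 2, v.2) := by
  have := (hh.hasFDerivAt.comp x (phi_hasFDerivAt' x)).fderiv
  rw [show (fun p : Pt m k => h (‖p.1‖ ^ 2 / 4, p.2))
      = h ∘ (fun p : Pt m k => ((‖p.1‖ ^ 2 / 4 : ℝ), p.2)) from rfl, this]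
  simp only [ContinuousLinearMap.comp_apply, ContinuousLinearMap.prod_apply,
    ContinuousLinearMap.smul_apply, ContinuousLinearMap.coe_fst',
    ContinuousLinearMap.coe_snd', innerSL_apply_apply, smul_eq_mul, nsmul_eq_mul]
  norm_num
  ring_nf

lemma XD_comp_phi (J : Fin k → Matrix (Fin m) (Fin m) ℝ)
    (h : ℝ × EuclideanSpace ℝ (Fin k) → ℝ) (hh : Differentiable ℝ h)
    (i : Fin m) (x : Pt m k) :
    XD J (fun p : Pt m k => h (‖p.1‖ ^ 2 / 4, p.2)) i x
      = (x.1 i / 2) * gXi h (‖x.1‖ ^ 2 / 4, x.2)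
        + (1/2) * ∑ ℓ, (∑ j, J ℓ i j * x.1 j) * gS h ℓ (‖x.1‖ ^ 2 / 4, x.2) := by
  unfold XD gXi gS
  rw [fderiv_comp_phi' h x (hh _) (EuclideanSpace.single i 1, 0)]
  have hsum : ∀ ℓ : Fin k,
      fderiv ℝ (fun p : Pt m k => h (‖p.1‖ ^ 2 / 4, p.2)) x
          ((0 : EuclideanSpace ℝ (Fin m)), EuclideanSpace.single ℓ 1)
        = fderiv ℝ h (‖x.1‖ ^ 2 / 4, x.2) (0, EuclideanSpace.single ℓ 1) := by
    intro ℓ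
    rw [fderiv_comp_phi' h x (hh _) (0, EuclideanSpace.single ℓ 1)]
    simp
  simp only [hsum]
  congr 1
  have hi : (inner ℝ x.1 (EuclideanSpace.single i 1) : ℝ) = x.1 i := by
    simp [EuclideanSpace.inner_single_right]
  rw [hi]
  have hv : ((x.1 i / 2 : ℝ), (0 : EuclideanSpace ℝ (Fin k)))
      = (x.1 i / 2) • ((1:ℝ), (0 : EuclideanSpace ℝ (Fin k))) := by
    simp
  rw [hv, ContinuousLinearMap.map_smul, smul_eq_mul]

lemma contDiff_gGradSq {g : ℝ × EuclideanSpace ℝ (Fin k) → ℝ} (hg : ContDiff ℝ 2 g) :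
    ContDiff ℝ 1 (gGradSq g) := by
  have h1 : ContDiff ℝ 1 (fderiv ℝ g) := hg.fderiv_right (by norm_num)
  have hxi : ContDiff ℝ 1 (gXi g) := h1.clm_apply contDiff_const
  have hs : ∀ ℓ : Fin k, ContDiff ℝ 1 (gS g ℓ) := fun ℓ => h1.clm_apply contDiff_const
  unfold gGradSq
  exact (hxi.pow 2).add (ContDiff.sum fun ℓ _ => (hs ℓ).pow 2)

lemma fderiv_mulH {g : ℝ × EuclideanSpace ℝ (Fin k) → ℝ} (hg : ContDiff ℝ 2 g)
    (y v : ℝ × EuclideanSpace ℝ (Fin k)) :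
    fderiv ℝ (fun w : ℝ × EuclideanSpace ℝ (Fin k) => w.1 * gGradSq g w) y v
      = v.1 * gGradSq g y + y.1 * fderiv ℝ (gGradSq g) y v := by
  have hG := (contDiff_gGradSq hg).differentiable one_ne_zero
  have h1 : HasFDerivAt (fun w : ℝ × EuclideanSpace ℝ (Fin k) => w.1)
      (ContinuousLinearMap.fst ℝ ℝ (EuclideanSpace ℝ (Fin k))) y := hasFDerivAt_fst
  have h2 : HasFDerivAt (gGradSq g) (fderiv ℝ (gGradSq g) y) y := (hG y).hasFDerivAt
  rw [show (fun w : ℝ × EuclideanSpace ℝ (Fin k) => w.1 * gGradSq g w) = (fun w => w.1) * gGradSq g from rfl,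
    (h1.mul h2).fderiv]
  simp only [ContinuousLinearMap.add_apply, ContinuousLinearMap.smul_apply,
    ContinuousLinearMap.coe_fst', smul_eq_mul]
  ring


/-- for f(z,σ) = g(|z|²/4, σ) with g of class C², with ξ = |z|²/4 one has
Δ_{H,∞} f = ξ²·Δ_∞ g + (ξ/2)·g_ξ·|∇g|². -/
theorem horizontal_infinity_laplacian_of_partial_symmetry
    (hm : 1 ≤ m) (hk : 1 ≤ k)
    (J : Fin k → Matrix (Fin m) (Fin m) ℝ) (hJ : HType J)
    (g : ℝ × EuclideanSpace ℝ (Fin k) → ℝ) (hg : ContDiff ℝ 2 g)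
    (f : Pt m k → ℝ) (hf : ∀ x : Pt m k, f x = g (‖x.1‖ ^ 2 / 4, x.2))
    (x : Pt m k) :
    hInfLap J f x =
      (‖x.1‖ ^ 2 / 4) ^ 2 * gInf g (‖x.1‖ ^ 2 / 4, x.2)
        + ((‖x.1‖ ^ 2 / 4) / 2) * gXi g (‖x.1‖ ^ 2 / 4, x.2) * gGradSq g (‖x.1‖ ^ 2 / 4, x.2) := by
  have hnorm : ∀ z : EuclideanSpace ℝ (Fin m), ‖z‖ ^ 2 = ∑ j, (z j)^2 := by
    intro z
    rw [EuclideanSpace.norm_eq, Real.sq_sqrt (by positivity)]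
    exact Finset.sum_congr rfl fun j _ => by rw [Real.norm_eq_abs, sq_abs]
  have hgd : Differentiable ℝ g := hg.differentiable (by norm_num)
  have hG1 : ContDiff ℝ 1 (gGradSq g) := contDiff_gGradSq hg
  set H : ℝ × EuclideanSpace ℝ (Fin k) → ℝ := fun w => w.1 * gGradSq g w with hH
  have hHd : Differentiable ℝ H := (contDiff_fst.mul hG1).differentiable one_ne_zero
  have hfg : f = fun p : Pt m k => g (‖p.1‖ ^ 2 / 4, p.2) := funext hf
  have hgrad : hGradSq J f = fun p : Pt m k => H (‖p.1‖ ^ 2 / 4, p.2) := by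
    funext p
    show (∑ i, (XD J f i p)^2) = _
    calc ∑ i, (XD J f i p) ^ 2
        = ∑ i, ((p.1 i / 2) * gXi g (‖p.1‖^2/4, p.2)
            + (1/2) * ∑ ℓ, (∑ j, J ℓ i j * p.1 j) * gS g ℓ (‖p.1‖^2/4, p.2))
          * ((p.1 i / 2) * gXi g (‖p.1‖^2/4, p.2)
            + (1/2) * ∑ ℓ, (∑ j, J ℓ i j * p.1 j) * gS g ℓ (‖p.1‖^2/4, p.2)) := by
          apply Finset.sum_congr rfl; intro i _
          rw [pow_two, hfg, XD_comp_phi J g hgd i p]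
      _ = ((∑ j, (p.1 j)^2) / 4) * (gXi g (‖p.1‖^2/4, p.2) * gXi g (‖p.1‖^2/4, p.2)
            + ∑ ℓ, gS g ℓ (‖p.1‖^2/4, p.2) * gS g ℓ (‖p.1‖^2/4, p.2)) :=
          key_sum' hJ p.1 _ _ _ _
      _ = H (‖p.1‖ ^ 2 / 4, p.2) := by
          rw [hH, ← hnorm p.1]
          show _ = (‖p.1‖ ^ 2 / 4) * gGradSq g (‖p.1‖ ^ 2 / 4, p.2)
          unfold gGradSq
          simp only [pow_two]
  have hXiH : gXi H (‖x.1‖ ^ 2 / 4, x.2)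
      = gGradSq g (‖x.1‖ ^ 2 / 4, x.2)
        + (‖x.1‖ ^ 2 / 4) * fderiv ℝ (gGradSq g) (‖x.1‖ ^ 2 / 4, x.2) (1, 0) := by
    unfold gXi
    rw [hH, fderiv_mulH hg]
    norm_num
  have hSH : ∀ ℓ : Fin k, gS H ℓ (‖x.1‖ ^ 2 / 4, x.2)
      = (‖x.1‖ ^ 2 / 4) * fderiv ℝ (gGradSq g) (‖x.1‖ ^ 2 / 4, x.2)
          (0, EuclideanSpace.single ℓ 1) := by
    intro ℓ
    unfold gS
    rw [hH, fderiv_mulH hg]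
    norm_num
  unfold hInfLap
  rw [hgrad, hfg]
  have step : ∑ i, XD J (fun p : Pt m k => H (‖p.1‖ ^ 2 / 4, p.2)) i x
      * XD J (fun p : Pt m k => g (‖p.1‖ ^ 2 / 4, p.2)) i x
      = ((∑ j, (x.1 j)^2) / 4) * (gXi H (‖x.1‖ ^ 2 / 4, x.2) * gXi g (‖x.1‖ ^ 2 / 4, x.2)
          + ∑ ℓ, gS H ℓ (‖x.1‖ ^ 2 / 4, x.2) * gS g ℓ (‖x.1‖ ^ 2 / 4, x.2)) := by
    rw [Finset.sum_congr rfl fun i _ => by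
      rw [XD_comp_phi J H hHd i x, XD_comp_phi J g hgd i x]]
    exact key_sum' hJ x.1 _ _ _ _
  rw [step, ← hnorm x.1, hXiH]
  have hsum2 : ∑ ℓ, gS H ℓ (‖x.1‖ ^ 2 / 4, x.2) * gS g ℓ (‖x.1‖ ^ 2 / 4, x.2)
      = (‖x.1‖ ^ 2 / 4) * ∑ ℓ, fderiv ℝ (gGradSq g) (‖x.1‖ ^ 2 / 4, x.2)
          (0, EuclideanSpace.single ℓ 1) * gS g ℓ (‖x.1‖ ^ 2 / 4, x.2) := by
    rw [Finset.mul_sum]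
    apply Finset.sum_congr rfl; intro ℓ _
    rw [hSH ℓ]; ring
  rw [hsum2]
  unfold gInf
  ring

end
end

section
/- Let 1 < p < ∞, let F be a C² real function on an open subinterval of (0,∞), and let N(z,σ) = (|z|⁴ + 16|σ|²)^{1/4}. Then at every point x = (z,σ) with z ≠ 0, N(x) in the domain of F, and F'(N(x)) ≠ 0, one has Δ_{H,p}(F ∘ N)(x) = (p−1) (|F'(N)|^{p−2} / N^p) [ F''(N) + ((Q−1)/(p−1)) F'(N)/N ] |z|^p, where N = N(x) and Q = m + 2k. -/
open scoped BigOperators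
open Matrix

noncomputable section

variable {m k : ℕ}

namespace PLapAux

def L1 (i : Fin m) : Pt m k →L[ℝ] ℝ :=
  (EuclideanSpace.proj i).comp (ContinuousLinearMap.fst ℝ _ _)
def L2 (ℓ : Fin k) : Pt m k →L[ℝ] ℝ :=
  (EuclideanSpace.proj ℓ).comp (ContinuousLinearMap.snd ℝ _ _)

@[simp] lemma L1_apply (i : Fin m) (v : Pt m k) : L1 i v = v.1 i := rfl
@[simp] lemma L2_apply (ℓ : Fin k) (v : Pt m k) : L2 ℓ v = v.2 ℓ := rfl

def e1 (m k : ℕ) (i : Fin m) : Pt m k := (EuclideanSpace.single i 1, 0)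
def e2 (m k : ℕ) (ℓ : Fin k) : Pt m k := (0, EuclideanSpace.single ℓ 1)

@[simp] lemma e1_fst (i : Fin m) (j : Fin m) :
    (e1 m k i).1 j = if j = i then (1:ℝ) else 0 := EuclideanSpace.single_apply i 1 j
@[simp] lemma e1_snd (i : Fin m) (ℓ : Fin k) : (e1 m k i).2 ℓ = 0 := rfl
@[simp] lemma e2_fst (ℓ : Fin k) (j : Fin m) : (e2 m k ℓ).1 j = 0 := rfl
@[simp] lemma e2_snd (ℓ : Fin k) (ℓ' : Fin k) :
    (e2 m k ℓ).2 ℓ' = if ℓ' = ℓ then (1:ℝ) else 0 := EuclideanSpace.single_apply ℓ 1 ℓ'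

def aF (y : Pt m k) : ℝ := ∑ j, (y.1 j)^2
def bF (y : Pt m k) : ℝ := ∑ ℓ, (y.2 ℓ)^2
def rhoF (y : Pt m k) : ℝ := (aF y)^2 + 16 * bF y

def Da (y : Pt m k) : Pt m k →L[ℝ] ℝ := ∑ j, (2 * y.1 j) • L1 j
def Db (y : Pt m k) : Pt m k →L[ℝ] ℝ := ∑ ℓ, (2 * y.2 ℓ) • L2 ℓ
def Drho (y : Pt m k) : Pt m k →L[ℝ] ℝ := (2 * aF y) • Da y + (16:ℝ) • Db y

@[simp] lemma Da_e1 (y : Pt m k) (i : Fin m) : Da y (e1 m k i) = 2 * y.1 i := by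
  simp [Da, ContinuousLinearMap.sum_apply, mul_ite, Finset.sum_ite_eq']
@[simp] lemma Da_e2 (y : Pt m k) (ℓ : Fin k) : Da y (e2 m k ℓ) = 0 := by
  simp [Da, ContinuousLinearMap.sum_apply]
@[simp] lemma Db_e1 (y : Pt m k) (i : Fin m) : Db y (e1 m k i) = 0 := by
  simp [Db, ContinuousLinearMap.sum_apply]
@[simp] lemma Db_e2 (y : Pt m k) (ℓ : Fin k) : Db y (e2 m k ℓ) = 2 * y.2 ℓ := by
  simp [Db, ContinuousLinearMap.sum_apply, mul_ite, Finset.sum_ite_eq']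


@[simp] lemma Drho_e1 (y : Pt m k) (i : Fin m) : Drho y (e1 m k i) = 4 * aF y * y.1 i := by
  simp [Drho]; ring
@[simp] lemma Drho_e2 (y : Pt m k) (ℓ : Fin k) : Drho y (e2 m k ℓ) = 32 * y.2 ℓ := by
  simp [Drho]; ring

lemma hasFDerivAt_aF (y : Pt m k) : HasFDerivAt aF (Da y) y := by
  have h : ∀ j : Fin m, HasFDerivAt (fun y : Pt m k => (y.1 j)^2)
      ((y.1 j) • L1 j + (y.1 j) • L1 j) y := by
    intro j
    have := ((L1 (m:=m) (k:=k) j).hasFDerivAt (x := y)).fun_mul ((L1 j).hasFDerivAt (x := y))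
    simpa [pow_two] using this
  have := HasFDerivAt.fun_sum (fun j (_ : j ∈ Finset.univ) => h j)
  have h2 : (∑ j : Fin m, ((y.1 j) • L1 (m:=m) (k:=k) j + (y.1 j) • L1 j)) = Da y := by
    unfold Da
    exact Finset.sum_congr rfl fun j _ => by rw [← add_smul, two_mul]
  rw [h2] at this
  exact this

lemma hasFDerivAt_bF (y : Pt m k) : HasFDerivAt bF (Db y) y := by
  have h : ∀ ℓ : Fin k, HasFDerivAt (fun y : Pt m k => (y.2 ℓ)^2)
      ((y.2 ℓ) • L2 ℓ + (y.2 ℓ) • L2 ℓ) y := by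
    intro ℓ
    have := ((L2 (m:=m) (k:=k) ℓ).hasFDerivAt (x := y)).fun_mul ((L2 ℓ).hasFDerivAt (x := y))
    simpa [pow_two] using this
  have := HasFDerivAt.fun_sum (fun ℓ (_ : ℓ ∈ Finset.univ) => h ℓ)
  have h2 : (∑ ℓ : Fin k, ((y.2 ℓ) • L2 (m:=m) (k:=k) ℓ + (y.2 ℓ) • L2 ℓ)) = Db y := by
    unfold Db
    exact Finset.sum_congr rfl fun ℓ _ => by rw [← add_smul, two_mul]
  rw [h2] at this
  exact this

lemma hasFDerivAt_rhoF (y : Pt m k) : HasFDerivAt rhoF (Drho y) y := by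
  have ha := hasFDerivAt_aF y
  have hsq : HasFDerivAt (fun y : Pt m k => (aF y)^2) ((2 * aF y) • Da y) y := by
    have := ha.fun_mul ha
    have h2 : aF y • Da y + aF y • Da y = (2 * aF y) • Da y := by rw [← add_smul, two_mul]
    rw [← h2]; simpa [pow_two] using this
  have hb : HasFDerivAt (fun y : Pt m k => 16 * bF y) ((16:ℝ) • Db y) y :=
    (hasFDerivAt_bF y).const_mul 16
  exact hsq.add hb

end PLapAux
namespace PLapAux

lemma aF_eq (y : Pt m k) : aF y = ‖y.1‖^2 := by
  rw [EuclideanSpace.norm_eq, Real.sq_sqrt (by positivity)]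
  simp [aF]

lemma bF_eq (y : Pt m k) : bF y = ‖y.2‖^2 := by
  rw [EuclideanSpace.norm_eq, Real.sq_sqrt (by positivity)]
  simp [bF]

lemma gaugeN_eq (y : Pt m k) : gaugeN y = rhoF y ^ ((1:ℝ)/4) := by
  unfold gaugeN rhoF
  rw [aF_eq, bF_eq]
  ring_nf

lemma aF_pos {y : Pt m k} (hz : y.1 ≠ 0) : 0 < aF y := by
  rw [aF_eq]; exact pow_pos (norm_pos_iff.mpr hz) 2

lemma bF_nonneg (y : Pt m k) : 0 ≤ bF y := by rw [bF_eq]; positivity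

lemma rhoF_pos {y : Pt m k} (hz : y.1 ≠ 0) : 0 < rhoF y := by
  have := aF_pos hz; have := bF_nonneg y; unfold rhoF; nlinarith

def DN (y : Pt m k) : Pt m k →L[ℝ] ℝ :=
  ((1:ℝ)/4 * rhoF y ^ ((1:ℝ)/4 - 1)) • Drho y

lemma hasFDerivAt_gaugeN {y : Pt m k} (h : 0 < rhoF y) :
    HasFDerivAt (gaugeN (m:=m) (k:=k)) (DN y) y := by
  have h1 : HasDerivAt (fun t : ℝ => t ^ ((1:ℝ)/4))
      ((1:ℝ)/4 * rhoF y ^ ((1:ℝ)/4 - 1)) (rhoF y) :=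
    Real.hasDerivAt_rpow_const (Or.inl h.ne')
  have h2 := h1.comp_hasFDerivAt y (hasFDerivAt_rhoF y)
  have h3 : (fun t : ℝ => t ^ ((1:ℝ)/4)) ∘ rhoF = gaugeN (m:=m) (k:=k) := by
    funext y; simp [Function.comp, gaugeN_eq]
  rw [h3] at h2
  exact h2

@[simp] lemma DN_e1 (y : Pt m k) (i : Fin m) :
    DN y (e1 m k i) = rhoF y ^ (-(3:ℝ)/4) * (aF y * y.1 i) := by
  have : (1:ℝ)/4 - 1 = -(3:ℝ)/4 := by norm_num
  simp [DN, Drho, this]; ring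
@[simp] lemma DN_e2 (y : Pt m k) (ℓ : Fin k) :
    DN y (e2 m k ℓ) = rhoF y ^ (-(3:ℝ)/4) * (8 * y.2 ℓ) := by
  have : (1:ℝ)/4 - 1 = -(3:ℝ)/4 := by norm_num
  simp [DN, Drho, this]; ring

/-- (J_ℓ z)_i as a function of the point. -/
def tF (J : Fin k → Matrix (Fin m) (Fin m) ℝ) (ℓ : Fin k) (i : Fin m) (y : Pt m k) : ℝ :=
  ∑ j, J ℓ i j * y.1 j

def wF (J : Fin k → Matrix (Fin m) (Fin m) ℝ) (i : Fin m) (y : Pt m k) : ℝ :=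
  aF y * y.1 i + 4 * ∑ ℓ, y.2 ℓ * tF J ℓ i y

def Dw (J : Fin k → Matrix (Fin m) (Fin m) ℝ) (i : Fin m) (y : Pt m k) : Pt m k →L[ℝ] ℝ :=
  (aF y • L1 i + y.1 i • Da y) +
    (4:ℝ) • ∑ ℓ, (y.2 ℓ • (∑ j, (J ℓ i j) • L1 j) + tF J ℓ i y • L2 ℓ)

lemma hasFDerivAt_wF (J : Fin k → Matrix (Fin m) (Fin m) ℝ) (i : Fin m) (y : Pt m k) :
    HasFDerivAt (wF J i) (Dw J i y) y := by
  have h1 : HasFDerivAt (fun y : Pt m k => aF y * y.1 i)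
      (aF y • L1 i + y.1 i • Da y) y :=
    (hasFDerivAt_aF y).fun_mul ((L1 i).hasFDerivAt)
  have h2 : ∀ ℓ : Fin k, HasFDerivAt (fun y : Pt m k => y.2 ℓ * tF J ℓ i y)
      (y.2 ℓ • (∑ j, (J ℓ i j) • L1 j) + tF J ℓ i y • L2 ℓ) y := by
    intro ℓ
    have hin : HasFDerivAt (fun y : Pt m k => tF J ℓ i y)
        (∑ j, (J ℓ i j) • L1 (m:=m) (k:=k) j) y :=
      HasFDerivAt.fun_sum (fun j _ => ((L1 j).hasFDerivAt).const_mul (J ℓ i j))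
    exact ((L2 ℓ).hasFDerivAt).fun_mul hin
  have h3 := (HasFDerivAt.fun_sum (fun ℓ (_ : ℓ ∈ Finset.univ) => h2 ℓ)).const_mul (4:ℝ)
  exact h1.add h3

@[simp] lemma Dw_e1 (J : Fin k → Matrix (Fin m) (Fin m) ℝ) (i : Fin m) (y : Pt m k) :
    Dw J i y (e1 m k i) = aF y + 2 * (y.1 i)^2 + 4 * ∑ ℓ, y.2 ℓ * J ℓ i i := by
  simp [Dw, ContinuousLinearMap.sum_apply, mul_ite, Finset.sum_ite_eq', Finset.mul_sum]
  ring

@[simp] lemma Dw_e2 (J : Fin k → Matrix (Fin m) (Fin m) ℝ) (i : Fin m) (ℓ : Fin k) (y : Pt m k) :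
    Dw J i y (e2 m k ℓ) = 4 * tF J ℓ i y := by
  simp [Dw, ContinuousLinearMap.sum_apply, mul_ite, Finset.sum_ite_eq']

lemma continuous_aF : Continuous (aF (m:=m) (k:=k)) := by
  unfold aF
  exact continuous_finset_sum _ fun j _ => ((L1 j).continuous.pow 2 : _)

lemma continuous_bF : Continuous (bF (m:=m) (k:=k)) := by
  unfold bF
  exact continuous_finset_sum _ fun ℓ _ => ((L2 ℓ).continuous.pow 2 : _)

lemma continuous_rhoF : Continuous (rhoF (m:=m) (k:=k)) := by
  unfold rhoF
  exact ((continuous_aF.pow 2).add (continuous_const.mul continuous_bF) : _)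

lemma continuous_gaugeN : Continuous (gaugeN (m:=m) (k:=k)) := by
  have h : Continuous (fun t : ℝ => t ^ ((1:ℝ)/4)) := by
    rw [continuous_iff_continuousAt]
    exact fun t => Real.continuousAt_rpow_const t _ (Or.inr (by norm_num))
  have : gaugeN (m:=m) (k:=k) = (fun t : ℝ => t ^ ((1:ℝ)/4)) ∘ rhoF := by
    funext y; simp [Function.comp, gaugeN_eq]
  rw [this]
  exact h.comp continuous_rhoF

end PLapAux


namespace PLapAux

/-- Quadratic form z ↦ zᵀ M z written with explicit sums. -/
def qf (M : Matrix (Fin m) (Fin m) ℝ) (z : EuclideanSpace ℝ (Fin m)) : ℝ :=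
  ∑ i, ∑ j, M i j * z j * z i

lemma qf_transpose (M : Matrix (Fin m) (Fin m) ℝ) (z : EuclideanSpace ℝ (Fin m)) :
    qf Mᵀ z = qf M z := by
  unfold qf
  rw [Finset.sum_comm]
  exact Finset.sum_congr rfl fun i _ => Finset.sum_congr rfl fun j _ => by
    rw [Matrix.transpose_apply]; ring

lemma qf_add (M M' : Matrix (Fin m) (Fin m) ℝ) (z : EuclideanSpace ℝ (Fin m)) :
    qf (M + M') z = qf M z + qf M' z := by
  unfold qf
  rw [← Finset.sum_add_distrib]
  exact Finset.sum_congr rfl fun i _ => by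
    rw [← Finset.sum_add_distrib]
    exact Finset.sum_congr rfl fun j _ => by rw [Matrix.add_apply]; ring

lemma qf_neg (M : Matrix (Fin m) (Fin m) ℝ) (z : EuclideanSpace ℝ (Fin m)) :
    qf (-M) z = - qf M z := by
  unfold qf
  rw [← Finset.sum_neg_distrib]
  exact Finset.sum_congr rfl fun i _ => by
    rw [← Finset.sum_neg_distrib]
    exact Finset.sum_congr rfl fun j _ => by rw [Matrix.neg_apply]; ring

lemma qf_smul_one (c : ℝ) (z : EuclideanSpace ℝ (Fin m)) :
    qf (c • (1 : Matrix (Fin m) (Fin m) ℝ)) z = c * ∑ j, (z j)^2 := by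
  unfold qf
  rw [Finset.mul_sum]
  exact Finset.sum_congr rfl fun i _ => by
    rw [Finset.sum_eq_single i]
    · simp [Matrix.one_apply]; ring
    · intro j _ hj
      simp [Matrix.one_apply, Ne.symm hj]
    · simp

variable {J : Fin k → Matrix (Fin m) (Fin m) ℝ}

lemma J_diag (hJ : HType J) (ℓ : Fin k) (i : Fin m) : J ℓ i i = 0 := by
  have := congrFun (congrFun (hJ.1 ℓ) i) i
  rw [Matrix.transpose_apply, Matrix.neg_apply] at this
  linarith

lemma sum_tF_z (hJ : HType J) (ℓ : Fin k) (y : Pt m k) :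
    ∑ i, tF J ℓ i y * y.1 i = 0 := by
  have hskew : ∀ i j, J ℓ i j = -(J ℓ j i) := fun i j => by
    have := congrFun (congrFun (hJ.1 ℓ) j) i
    rwa [Matrix.transpose_apply, Matrix.neg_apply] at this
  have h1 : ∑ i, tF J ℓ i y * y.1 i = qf (J ℓ) y.1 := by
    unfold tF qf
    exact Finset.sum_congr rfl fun i _ => by rw [Finset.sum_mul]
  have h2 : qf (J ℓ) y.1 = qf (-(J ℓ)) y.1 := by
    rw [← hJ.1 ℓ, qf_transpose]
  rw [qf_neg] at h2
  rw [h1]; linarith [h2]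

lemma sum_tF_tF (hJ : HType J) (ℓ ℓ' : Fin k) (y : Pt m k) :
    ∑ i, tF J ℓ i y * tF J ℓ' i y = (if ℓ = ℓ' then 1 else 0) * aF y := by
  have h1 : ∑ i, tF J ℓ i y * tF J ℓ' i y = qf ((J ℓ)ᵀ * J ℓ') y.1 := by
    unfold tF qf
    simp_rw [Matrix.mul_apply, Matrix.transpose_apply, Finset.sum_mul, Finset.mul_sum]
    rw [Finset.sum_comm]
    refine Finset.sum_congr rfl fun a _ => ?_
    rw [Finset.sum_comm]
    exact Finset.sum_congr rfl fun b _ => Finset.sum_congr rfl fun i _ => by ring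
  have htr : (J ℓ)ᵀ * J ℓ' = -(J ℓ * J ℓ') := by rw [hJ.1 ℓ]; simp [Matrix.neg_mul]
  have hsym : qf (J ℓ * J ℓ') y.1 = qf (J ℓ' * J ℓ) y.1 := by
    rw [← qf_transpose (J ℓ * J ℓ')]
    rw [Matrix.transpose_mul, hJ.1 ℓ, hJ.1 ℓ', Matrix.neg_mul, Matrix.mul_neg, neg_neg]
  have hrel := congrArg (fun M => qf M y.1) (hJ.2 ℓ ℓ')
  simp only [qf_add, qf_smul_one] at hrel
  rw [h1, htr, qf_neg]
  have haF : ∑ j, (y.1 j)^2 = aF y := rfl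
  rw [haF] at hrel
  by_cases h : ℓ = ℓ'
  · simp only [h, if_true] at hrel ⊢
    rw [← h] at hrel ⊢
    linarith [hsym, hrel]
  · simp only [h, if_false] at hrel ⊢
    rw [zero_mul]
    rw [zero_mul] at hrel
    linarith [hsym, hrel]

end PLapAux


namespace PLapAux

variable {J : Fin k → Matrix (Fin m) (Fin m) ℝ}

/-- S_i = Σ_ℓ σ_ℓ (J_ℓ z)_i. -/
def sF (J : Fin k → Matrix (Fin m) (Fin m) ℝ) (i : Fin m) (y : Pt m k) : ℝ :=
  ∑ ℓ, y.2 ℓ * tF J ℓ i y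

lemma wF_eq (i : Fin m) (y : Pt m k) : wF J i y = aF y * y.1 i + 4 * sF J i y := rfl

lemma sum_S_z (hJ : HType J) (y : Pt m k) : ∑ i, sF J i y * y.1 i = 0 := by
  unfold sF
  simp_rw [Finset.sum_mul]
  rw [Finset.sum_comm]
  refine Finset.sum_eq_zero fun ℓ _ => ?_
  simp_rw [mul_assoc, ← Finset.mul_sum]
  rw [sum_tF_z hJ, mul_zero]

lemma sum_S_sq (hJ : HType J) (y : Pt m k) :
    ∑ i, (sF J i y)^2 = bF y * aF y := by
  unfold sF
  simp_rw [pow_two, Finset.sum_mul, Finset.mul_sum]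
  rw [Finset.sum_comm]
  have h : ∀ ℓ : Fin k, ∑ i : Fin m, ∑ ℓ' : Fin k,
      (y.2 ℓ * tF J ℓ i y) * (y.2 ℓ' * tF J ℓ' i y)
      = (y.2 ℓ)^2 * aF y := by
    intro ℓ
    rw [Finset.sum_comm]
    have h2 : ∀ ℓ' : Fin k, ∑ i : Fin m, (y.2 ℓ * tF J ℓ i y) * (y.2 ℓ' * tF J ℓ' i y)
        = (y.2 ℓ * y.2 ℓ') * ((if ℓ = ℓ' then (1:ℝ) else 0) * aF y) := by
      intro ℓ'
      rw [← sum_tF_tF hJ ℓ ℓ' y, Finset.mul_sum]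
      exact Finset.sum_congr rfl fun i _ => by ring
    simp_rw [h2]
    rw [Finset.sum_eq_single ℓ]
    · rw [if_pos rfl]; ring
    · intro ℓ' _ hne
      simp [Ne.symm hne]
    · simp
  simp_rw [h]
  rw [← Finset.sum_mul]
  rfl

lemma sum_z_w (hJ : HType J) (y : Pt m k) :
    ∑ i, y.1 i * wF J i y = (aF y)^2 := by
  simp_rw [wF_eq]
  have h : ∀ i, y.1 i * (aF y * y.1 i + 4 * sF J i y)
      = aF y * (y.1 i)^2 + 4 * (sF J i y * y.1 i) := fun i => by ring
  simp_rw [h, Finset.sum_add_distrib, ← Finset.mul_sum, sum_S_z hJ]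
  have : (∑ i, (y.1 i)^2) = aF y := rfl
  rw [this]
  ring

lemma sum_w_sq (hJ : HType J) (y : Pt m k) :
    ∑ i, (wF J i y)^2 = aF y * rhoF y := by
  simp_rw [wF_eq]
  have h : ∀ i, (aF y * y.1 i + 4 * sF J i y)^2
      = (aF y)^2 * (y.1 i)^2 + 8 * aF y * (sF J i y * y.1 i) + 16 * (sF J i y)^2 :=
    fun i => by ring
  simp_rw [h, Finset.sum_add_distrib, ← Finset.mul_sum, sum_S_z hJ, sum_S_sq hJ]
  have : (∑ i, (y.1 i)^2) = aF y := rfl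
  rw [this]
  unfold rhoF
  ring

lemma sum_S_w (hJ : HType J) (y : Pt m k) :
    ∑ i, sF J i y * wF J i y = 4 * (aF y * bF y) := by
  simp_rw [wF_eq]
  have h : ∀ i, sF J i y * (aF y * y.1 i + 4 * sF J i y)
      = aF y * (sF J i y * y.1 i) + 4 * (sF J i y)^2 := fun i => by ring
  simp_rw [h, Finset.sum_add_distrib, ← Finset.mul_sum, sum_S_z hJ, sum_S_sq hJ]
  ring

lemma sum_tF_sq (hJ : HType J) (y : Pt m k) (ℓ : Fin k) :
    ∑ i, (tF J ℓ i y)^2 = aF y := by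
  have := sum_tF_tF hJ ℓ ℓ y
  simp only [if_pos rfl, one_mul] at this
  simpa [pow_two] using this

variable {F : ℝ → ℝ}

lemma hasFDerivAt_FN {y : Pt m k} (hρ : 0 < rhoF y)
    (hd : HasDerivAt F (deriv F (gaugeN y)) (gaugeN y)) :
    HasFDerivAt (fun y : Pt m k => F (gaugeN y)) (deriv F (gaugeN y) • DN y) y := by
  have := hd.comp_hasFDerivAt y (hasFDerivAt_gaugeN hρ)
  simpa [Function.comp_def] using this

lemma XD_FN (hJ : HType J) {y : Pt m k} (hρ : 0 < rhoF y)
    (hd : HasDerivAt F (deriv F (gaugeN y)) (gaugeN y)) (i : Fin m) :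
    XD J (fun y => F (gaugeN y)) i y
      = (deriv F (gaugeN y) * rhoF y ^ (-(3:ℝ)/4)) * wF J i y := by
  unfold XD
  rw [(hasFDerivAt_FN hρ hd).fderiv]
  have he1 : ((EuclideanSpace.single i 1, 0) : Pt m k) = e1 m k i := rfl
  have he2 : ∀ ℓ : Fin k,
      (((0 : EuclideanSpace ℝ (Fin m)), EuclideanSpace.single ℓ (1:ℝ)) : Pt m k) = e2 m k ℓ :=
    fun _ => rfl
  rw [he1]
  simp_rw [he2]
  simp only [ContinuousLinearMap.smul_apply, smul_eq_mul, DN_e1, DN_e2]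
  rw [wF_eq]
  have hs : ∑ ℓ : Fin k, tF J ℓ i y * (deriv F (gaugeN y) * (rhoF y ^ (-(3:ℝ)/4) * (8 * y.2 ℓ)))
      = (deriv F (gaugeN y) * rhoF y ^ (-(3:ℝ)/4) * 8) * sF J i y := by
    unfold sF
    rw [Finset.mul_sum]
    exact Finset.sum_congr rfl fun ℓ _ => by ring
  have htf : ∀ ℓ : Fin k, (∑ j, J ℓ i j * y.1 j) = tF J ℓ i y := fun _ => rfl
  simp_rw [htf]
  rw [hs]
  ring

end PLapAux
namespace PLapAux

variable {J : Fin k → Matrix (Fin m) (Fin m) ℝ} {F : ℝ → ℝ}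

lemma hGradSq_FN (hJ : HType J) {y : Pt m k} (hρ : 0 < rhoF y)
    (hd : HasDerivAt F (deriv F (gaugeN y)) (gaugeN y)) :
    hGradSq J (fun y => F (gaugeN y)) y
      = (deriv F (gaugeN y))^2 * aF y * rhoF y ^ (-(1:ℝ)/2) := by
  unfold hGradSq
  have h : ∀ i : Fin m, (XD J (fun y => F (gaugeN y)) i y)^2
      = ((deriv F (gaugeN y) * rhoF y ^ (-(3:ℝ)/4))^2) * (wF J i y)^2 := by
    intro i
    rw [XD_FN hJ hρ hd i, mul_pow]
  simp_rw [h]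
  rw [← Finset.mul_sum, sum_w_sq hJ]
  have h2 : (rhoF y ^ (-(3:ℝ)/4))^2 = rhoF y ^ (-(3:ℝ)/2) := by
    rw [← Real.rpow_natCast (rhoF y ^ (-(3:ℝ)/4)) 2, ← Real.rpow_mul hρ.le]
    norm_num
  have h3 : rhoF y ^ (-(3:ℝ)/2) * rhoF y = rhoF y ^ (-(1:ℝ)/2) := by
    rw [show (-(1:ℝ)/2) = -(3:ℝ)/2 + 1 by norm_num, Real.rpow_add hρ, Real.rpow_one]
  rw [mul_pow, h2]
  rw [show deriv F (gaugeN y) ^ 2 * rhoF y ^ (-(3:ℝ)/2) * (aF y * rhoF y)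
      = deriv F (gaugeN y) ^ 2 * aF y * (rhoF y ^ (-(3:ℝ)/2) * rhoF y) from by ring, h3]

end PLapAux


namespace PLapAux

lemma XD_eval (J : Fin k → Matrix (Fin m) (Fin m) ℝ) (g : Pt m k → ℝ) (i : Fin m) (x : Pt m k) :
    XD J g i x = fderiv ℝ g x (e1 m k i)
      + (1/2) * ∑ ℓ, tF J ℓ i x * fderiv ℝ g x (e2 m k ℓ) := rfl

lemma sum_helper {k : ℕ} (C W B : ℝ) (g s : Fin k → ℝ) :
    ∑ ℓ, g ℓ * (C * (4 * g ℓ) + W * (B * s ℓ))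
      = 4 * C * (∑ ℓ, (g ℓ)^2) + B * W * (∑ ℓ, s ℓ * g ℓ) := by
  rw [Finset.mul_sum, Finset.mul_sum, ← Finset.sum_add_distrib]
  exact Finset.sum_congr rfl fun ℓ _ => by ring

end PLapAux



/-- Final scalar computation. -/
lemma final_algebra (p A B F1 F2 CM CK R : ℝ) (hp : 1 < p) (hA : 0 < A) (hB : 0 ≤ B)
    (hF1 : F1 ≠ 0) (hR : R = A^2 + 16*B) :
    (((F1^2 * A * R ^ (-(1:ℝ)/2)) ^ ((p-2)/2) * (F1 * R ^ (-(3:ℝ)/4))) * (CM*A + 2*A))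
    + ((F1^2 * A * R ^ (-(1:ℝ)/2)) ^ ((p-2)/2) *
          ( F1 * (-(3:ℝ)/4 * R ^ (-(3:ℝ)/4 - 1)) * (4*A)
            + R ^ (-(3:ℝ)/4) * (F2 * (R ^ (-(3:ℝ)/4) * A)) )
        + (F1 * R ^ (-(3:ℝ)/4)) * ((p-2)/2 * (F1^2 * A * R ^ (-(1:ℝ)/2)) ^ ((p-2)/2 - 1)) *
          ( F1^2*A * (-(1:ℝ)/2 * R ^ (-(1:ℝ)/2 - 1)) * (4*A)
            + R ^ (-(1:ℝ)/2) * (2*F1^2 + A * (2*F1*F2*(R ^ (-(3:ℝ)/4) * A))) )) * A^2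
    + 2 * (((F1^2 * A * R ^ (-(1:ℝ)/2)) ^ ((p-2)/2) * (F1 * R ^ (-(3:ℝ)/4))) * (CK*A))
    + ((F1^2 * A * R ^ (-(1:ℝ)/2)) ^ ((p-2)/2) *
          ( F1 * (-(3:ℝ)/4 * R ^ (-(3:ℝ)/4 - 1)) * 32
            + R ^ (-(3:ℝ)/4) * (F2 * (R ^ (-(3:ℝ)/4) * 8)) )
        + (F1 * R ^ (-(3:ℝ)/4)) * ((p-2)/2 * (F1^2 * A * R ^ (-(1:ℝ)/2)) ^ ((p-2)/2 - 1)) *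
          ( F1^2*A * (-(1:ℝ)/2 * R ^ (-(1:ℝ)/2 - 1)) * 32
            + R ^ (-(1:ℝ)/2) * (A * (2*F1*F2*(R ^ (-(3:ℝ)/4) * 8))) )) / 2 * (4*(A*B))
    = (p - 1) * (|F1| ^ (p - 2) / (R ^ ((1:ℝ)/4)) ^ p) *
        (F2 + ((CM + 2*CK - 1) / (p - 1)) * F1 / R ^ ((1:ℝ)/4)) * A ^ (p/2) := by
  have hRpos : 0 < R := by nlinarith
  have hF1sq : 0 < F1^2 := lt_of_le_of_ne (sq_nonneg F1) (Ne.symm (pow_ne_zero 2 hF1))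
  set r : ℝ := R ^ ((1:ℝ)/4) with hr_def
  have hrpos : 0 < r := Real.rpow_pos_of_pos hRpos _
  have keyn : ∀ n : ℕ, r^n = R ^ ((n:ℝ)/4) := by
    intro n
    rw [hr_def, ← Real.rpow_natCast (R ^ ((1:ℝ)/4)) n, ← Real.rpow_mul hRpos.le]
    ring_nf
  have key : ∀ n : ℕ, R ^ (-(n : ℝ)/4) = (r^n)⁻¹ := by
    intro n
    rw [show -(n:ℝ)/4 = -((n:ℝ)/4) by ring, Real.rpow_neg hRpos.le, keyn n]
  have e2 : R ^ (-(1:ℝ)/2) = (r^2)⁻¹ := by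
    rw [show -(1:ℝ)/2 = -((2:ℕ):ℝ)/4 by norm_num]; exact key 2
  have e3 : R ^ (-(3:ℝ)/4) = (r^3)⁻¹ := by
    rw [show -(3:ℝ)/4 = -((3:ℕ):ℝ)/4 by norm_num]; exact key 3
  have e6 : R ^ (-(1:ℝ)/2 - 1) = (r^6)⁻¹ := by
    rw [show -(1:ℝ)/2 - 1 = -((6:ℕ):ℝ)/4 by norm_num]; exact key 6
  have e7 : R ^ (-(3:ℝ)/4 - 1) = (r^7)⁻¹ := by
    rw [show -(3:ℝ)/4 - 1 = -((7:ℕ):ℝ)/4 by norm_num]; exact key 7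
  have hr4 : r^4 = R := by rw [keyn 4]; norm_num
  set Pa : ℝ := A ^ ((p-2)/2) with hPa_def
  set Pr : ℝ := R ^ ((p-2)/4) with hPr_def
  set W : ℝ := |F1| ^ (p-2) with hW_def
  have hPapos : 0 < Pa := Real.rpow_pos_of_pos hA _
  have hPrpos : 0 < Pr := Real.rpow_pos_of_pos hRpos _
  have hWpos : 0 < W := Real.rpow_pos_of_pos (abs_pos.mpr hF1) _
  have hG0pos : 0 < F1^2 * A * R ^ (-(1:ℝ)/2) :=
    mul_pos (mul_pos hF1sq hA) (Real.rpow_pos_of_pos hRpos _)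
  have hK : (F1^2 * A * R ^ (-(1:ℝ)/2)) ^ ((p-2)/2) = W * Pa * Pr⁻¹ := by
    rw [Real.mul_rpow (by positivity) (Real.rpow_pos_of_pos hRpos _).le,
        Real.mul_rpow (sq_nonneg F1) hA.le]
    congr 1
    · congr 1
      rw [← sq_abs F1, ← Real.rpow_natCast |F1| 2, ← Real.rpow_mul (abs_nonneg F1), hW_def]
      congr 1
      push_cast
      ring
    · rw [← Real.rpow_mul hRpos.le, show (-(1:ℝ)/2) * ((p-2)/2) = -((p-2)/4) by ring,
          Real.rpow_neg hRpos.le, hPr_def]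
  have hK1 : (F1^2 * A * R ^ (-(1:ℝ)/2)) ^ ((p-2)/2 - 1)
      = (W * Pa * Pr⁻¹) / (F1^2 * A * R ^ (-(1:ℝ)/2)) := by
    rw [Real.rpow_sub hG0pos, Real.rpow_one, hK]
  have hAp : A ^ (p/2) = Pa * A := by
    rw [show p/2 = (p-2)/2 + 1 by ring, Real.rpow_add hA, Real.rpow_one, hPa_def]
  have hrp : r ^ p = Pr * r^2 := by
    rw [hr_def, ← Real.rpow_mul hRpos.le, hPr_def, keyn 2, ← Real.rpow_add hRpos]
    congr 1
    push_cast
    ring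
  have hBval : B = (r^4 - A^2)/16 := by rw [hr4]; linarith
  rw [hK, hK1, hAp, hrp, e2, e3, e6, e7, hBval]
  have h2 : F1^2 * A * (r^2)⁻¹ ≠ 0 := by
    rw [← e2]; exact hG0pos.ne'
  have hp1 : p - 1 ≠ 0 := by linarith
  field_simp [hrpos.ne', hPapos.ne', hPrpos.ne', hWpos.ne', hA.ne', hF1, hp1]
  ring

open PLapAux

/-- for F of class C² on an open subinterval of (0,∞) and N the Korányi gauge,
at any point with z ≠ 0, N(x) in the domain of F and F'(N(x)) ≠ 0, one has
Δ_{H,p}(F∘N) = (p−1)(|F'(N)|^{p−2}/N^p)[F''(N) + ((Q−1)/(p−1))F'(N)/N]|z|^p, Q = m+2k. -/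
theorem p_laplacian_of_radial_function
    (hm : 1 ≤ m) (hk : 1 ≤ k)
    (J : Fin k → Matrix (Fin m) (Fin m) ℝ) (hJ : HType J)
    (p : ℝ) (hp : 1 < p)
    (F : ℝ → ℝ) (U : Set ℝ) (hUopen : IsOpen U) (hUsub : U ⊆ Set.Ioi (0 : ℝ))
    (hF : ContDiffOn ℝ 2 F U)
    (x : Pt m k) (hz : x.1 ≠ 0) (hNU : gaugeN x ∈ U)
    (hF' : deriv F (gaugeN x) ≠ 0) :
    hPLap J p (fun y => F (gaugeN y)) x =
      (p - 1) * (|deriv F (gaugeN x)| ^ (p - 2) / (gaugeN x) ^ p) *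
        (deriv (deriv F) (gaugeN x)
          + (((m : ℝ) + 2 * k - 1) / (p - 1)) * deriv F (gaugeN x) / gaugeN x) *
        ‖x.1‖ ^ p := by
  have hA : 0 < aF x := aF_pos hz
  have hRpos : 0 < rhoF x := rhoF_pos hz
  have hdF : ∀ t ∈ U, HasDerivAt F (deriv F t) t := fun t ht =>
    ((hF.differentiableOn (by norm_num)).differentiableAt (hUopen.mem_nhds ht)).hasDerivAt
  have hC1 : ContDiffOn ℝ 1 (deriv F) U := hF.deriv_of_isOpen hUopen (by norm_num)
  have hdF2 : HasDerivAt (deriv F) (deriv (deriv F) (gaugeN x)) (gaugeN x) :=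
    ((hC1.differentiableOn (by norm_num)).differentiableAt (hUopen.mem_nhds hNU)).hasDerivAt
  have hVmem : (rhoF ⁻¹' Set.Ioi 0 ∩ gaugeN ⁻¹' U : Set (Pt m k)) ∈ nhds x :=
    ((isOpen_Ioi.preimage continuous_rhoF).inter
      (hUopen.preimage continuous_gaugeN)).mem_nhds ⟨hRpos, hNU⟩
  have hEq : ∀ i : Fin m, (fun y => hGradSq J (fun y => F (gaugeN y)) y ^ ((p - 2) / 2)
        * XD J (fun y => F (gaugeN y)) i y)
      =ᶠ[nhds x] fun y => ((fun y : Pt m k => ((deriv F (gaugeN y)) ^ 2 * aF y * rhoF y ^ (-(1:ℝ)/2)) ^ ((p-2)/2) * (deriv F (gaugeN y) * rhoF y ^ (-(3:ℝ)/4))) y) * wF J i y := by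
    intro i
    filter_upwards [hVmem] with y hy
    rw [hGradSq_FN hJ hy.1 (hdF _ hy.2), XD_FN hJ hy.1 (hdF _ hy.2) i]
    ring
  have hN' : HasFDerivAt (gaugeN (m:=m) (k:=k)) (DN x) x := hasFDerivAt_gaugeN hRpos
  have hdFN : HasFDerivAt (fun y : Pt m k => deriv F (gaugeN y))
      (deriv (deriv F) (gaugeN x) • DN x) x := by
    simpa [Function.comp_def] using hdF2.comp_hasFDerivAt x hN'
  have hsq : HasFDerivAt (fun y : Pt m k => (deriv F (gaugeN y)) ^ 2)
      (deriv F (gaugeN x) • (deriv (deriv F) (gaugeN x) • DN x)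
        + deriv F (gaugeN x) • (deriv (deriv F) (gaugeN x) • DN x)) x := by
    simpa [pow_two] using hdFN.fun_mul hdFN
  have h3 : HasFDerivAt (fun y : Pt m k => rhoF y ^ (-(1:ℝ)/2))
      ((-(1:ℝ)/2 * rhoF x ^ (-(1:ℝ)/2 - 1)) • Drho x) x := by
    simpa [Function.comp_def] using
      (Real.hasDerivAt_rpow_const (x := rhoF x) (p := -(1:ℝ)/2)
        (Or.inl hRpos.ne')).comp_hasFDerivAt x (hasFDerivAt_rhoF x)
  have h4 : HasFDerivAt (fun y : Pt m k => rhoF y ^ (-(3:ℝ)/4))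
      ((-(3:ℝ)/4 * rhoF x ^ (-(3:ℝ)/4 - 1)) • Drho x) x := by
    simpa [Function.comp_def] using
      (Real.hasDerivAt_rpow_const (x := rhoF x) (p := -(3:ℝ)/4)
        (Or.inl hRpos.ne')).comp_hasFDerivAt x (hasFDerivAt_rhoF x)
  have hu := (hsq.fun_mul (hasFDerivAt_aF x)).fun_mul h3
  have hG0 : (0:ℝ) < deriv F (gaugeN x) ^ 2 * aF x * rhoF x ^ (-(1:ℝ)/2) :=
    mul_pos (mul_pos (lt_of_le_of_ne (sq_nonneg _) (Ne.symm (pow_ne_zero 2 hF'))) hA)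
      (Real.rpow_pos_of_pos hRpos _)
  have hupow := (Real.hasDerivAt_rpow_const
      (x := deriv F (gaugeN x) ^ 2 * aF x * rhoF x ^ (-(1:ℝ)/2)) (p := (p-2)/2)
      (Or.inl hG0.ne')).comp_hasFDerivAt x hu
  have hPsi := hdFN.fun_mul h4
  have hPhi : HasFDerivAt (fun y : Pt m k => ((deriv F (gaugeN y)) ^ 2 * aF y * rhoF y ^ (-(1:ℝ)/2)) ^ ((p-2)/2) * (deriv F (gaugeN y) * rhoF y ^ (-(3:ℝ)/4))) _ x := hupow.fun_mul hPsi
  have halpha : ∀ i : Fin m, fderiv ℝ (fun y : Pt m k => ((deriv F (gaugeN y)) ^ 2 * aF y * rhoF y ^ (-(1:ℝ)/2)) ^ ((p-2)/2) * (deriv F (gaugeN y) * rhoF y ^ (-(3:ℝ)/4))) x (e1 m k i) = (((deriv F (gaugeN x) ^ 2 * aF x * rhoF x ^ (-(1:ℝ)/2)) ^ ((p-2)/2) * ( deriv F (gaugeN x) * (-(3:ℝ)/4 * rhoF x ^ (-(3:ℝ)/4 - 1)) * (4*aF x) + rhoF x ^ (-(3:ℝ)/4) * (deriv (deriv F) (gaugeN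 x) * (rhoF x ^ (-(3:ℝ)/4) * aF x)) ) + (deriv F (gaugeN x) * rhoF x ^ (-(3:ℝ)/4)) * ((p-2)/2 * (deriv F (gaugeN x) ^ 2 * aF x * rhoF x ^ (-(1:ℝ)/2)) ^ ((p-2)/2 - 1)) * ( deriv F (gaugeN x) ^ 2 * aF x * (-(1:ℝ)/2 * rhoF x ^ (-(1:ℝ)/2 - 1)) * (4*aF x) + rhoF x ^ (-(1:ℝ)/2) * (2*deriv F (gaugeN x) ^ 2 + aF x * (2*deriv F (gaugeN x)*deriv (deriv F) (gaugeN x)*(rhoF x ^ (-(3:ℝ)/4) * aF x))) ))) * x.1 i := by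
    intro i
    rw [hPhi.fderiv]
    simp only [Function.comp_apply, ContinuousLinearMap.add_apply, ContinuousLinearMap.smul_apply, smul_eq_mul,
      DN_e1, Da_e1, Db_e1, Drho_e1]
    ring
  have hbeta : ∀ ℓ : Fin k, fderiv ℝ (fun y : Pt m k => ((deriv F (gaugeN y)) ^ 2 * aF y * rhoF y ^ (-(1:ℝ)/2)) ^ ((p-2)/2) * (deriv F (gaugeN y) * rhoF y ^ (-(3:ℝ)/4))) x (e2 m k ℓ) = (((deriv F (gaugeN x) ^ 2 * aF x * rhoF x ^ (-(1:ℝ)/2)) ^ ((p-2)/2) * ( deriv F (gaugeN x) * (-(3:ℝ)/4 * rhoF x ^ (-(3:ℝ)/4 - 1)) * 32 + rhoF x ^ (-(3:ℝ)/4) * (deriv (deriv F) (gaugeN x) * (rhoF x ^ (-(3:ℝ)/4) * 8)) ) + (deriv F (gaugeN x) * rhoF x ^ (-(3:ℝ)/4)) * ((p-2)/2 * (deriv F (gaugeN x) ^ 2 * aF x * rhoF x ^ (-(1:ℝ)/2)) ^ ((p-2)/2 - 1)) * ( deriv F (gaugeN x) ^ 2 * aF x * (-(1:ℝ)/2 *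 rhoF x ^ (-(1:ℝ)/2 - 1)) * 32 + rhoF x ^ (-(1:ℝ)/2) * (aF x * (2*deriv F (gaugeN x)*deriv (deriv F) (gaugeN x)*(rhoF x ^ (-(3:ℝ)/4) * 8))) ))) * x.2 ℓ := by
    intro ℓ
    rw [hPhi.fderiv]
    simp only [Function.comp_apply, ContinuousLinearMap.add_apply, ContinuousLinearMap.smul_apply, smul_eq_mul,
      DN_e2, Da_e2, Db_e2, Drho_e2]
    ring
  have hmain : ∀ i : Fin m,
      XD J (fun y => hGradSq J (fun y => F (gaugeN y)) y ^ ((p - 2) / 2)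
        * XD J (fun y => F (gaugeN y)) i y) i x
      = ((deriv F (gaugeN x) ^ 2 * aF x * rhoF x ^ (-(1:ℝ)/2)) ^ ((p-2)/2) * (deriv F (gaugeN x) * rhoF x ^ (-(3:ℝ)/4))) * (aF x + 2*(x.1 i)^2) + (((deriv F (gaugeN x) ^ 2 * aF x * rhoF x ^ (-(1:ℝ)/2)) ^ ((p-2)/2) * ( deriv F (gaugeN x) * (-(3:ℝ)/4 * rhoF x ^ (-(3:ℝ)/4 - 1)) * (4*aF x) + rhoF x ^ (-(3:ℝ)/4) * (deriv (deriv F) (gaugeN x) * (rhoF x ^ (-(3:ℝ)/4) * aF x)) ) + (deriv F (gaugeN x) * rhoF x ^ (-(3:ℝ)/4)) * ((p-2)/2 * (deriv F (gaugeN x) ^ 2 * aF x * rhoF x ^ (-(1:ℝ)/2)) ^ ((p-2)/2 - 1)) * ( deriv F (gaugeN x) ^ 2 * aF x * (-(1:ℝ)/2 * rhoF x ^ (-(1:ℝ)/2 - 1)) * (4*aF x) + rhoF x ^ (-(1:ℝ)/2) * (2*deriv F (gaugeN x) ^ 2 + aF x * (2*deriv F (gaugeN x)*deriv (deriv F) (gaugeN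 x)*(rhoF x ^ (-(3:ℝ)/4) * aF x))) ))) * (x.1 i * wF J i x)
        + 2 * ((deriv F (gaugeN x) ^ 2 * aF x * rhoF x ^ (-(1:ℝ)/2)) ^ ((p-2)/2) * (deriv F (gaugeN x) * rhoF x ^ (-(3:ℝ)/4))) * (∑ ℓ, (tF J ℓ i x)^2)
        + (((deriv F (gaugeN x) ^ 2 * aF x * rhoF x ^ (-(1:ℝ)/2)) ^ ((p-2)/2) * ( deriv F (gaugeN x) * (-(3:ℝ)/4 * rhoF x ^ (-(3:ℝ)/4 - 1)) * 32 + rhoF x ^ (-(3:ℝ)/4) * (deriv (deriv F) (gaugeN x) * (rhoF x ^ (-(3:ℝ)/4) * 8)) ) + (deriv F (gaugeN x) * rhoF x ^ (-(3:ℝ)/4)) * ((p-2)/2 * (deriv F (gaugeN x) ^ 2 * aF x * rhoF x ^ (-(1:ℝ)/2)) ^ ((p-2)/2 - 1)) * ( deriv F (gaugeN x) ^ 2 * aF x * (-(1:ℝ)/2 * rhoF x ^ (-(1:ℝ)/2 - 1)) * 32 + rhoF x ^ (-(1:ℝ)/2) * (aF x * (2*deriv F (gaugeN x)*deriv (deriv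 F) (gaugeN x)*(rhoF x ^ (-(3:ℝ)/4) * 8))) ))) / 2 * (sF J i x * wF J i x) := by
    intro i
    have hPhiw := (hPhi.differentiableAt.hasFDerivAt).fun_mul (hasFDerivAt_wF J i x)
    have hfd := ((hEq i).fderiv_eq).trans hPhiw.fderiv
    rw [XD_eval, hfd]
    simp only [Function.comp_apply, ContinuousLinearMap.add_apply, ContinuousLinearMap.smul_apply, smul_eq_mul,
      Dw_e1, Dw_e2, halpha i]
    simp only [hbeta]
    simp only [J_diag hJ, mul_zero, Finset.sum_const_zero]
    rw [sum_helper]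
    rw [show (∑ ℓ, x.2 ℓ * tF J ℓ i x) = sF J i x from rfl]
    ring
  unfold hPLap
  simp_rw [hmain]
  rw [Finset.sum_add_distrib, Finset.sum_add_distrib, Finset.sum_add_distrib,
      ← Finset.mul_sum, ← Finset.mul_sum, ← Finset.mul_sum, ← Finset.mul_sum]
  rw [Finset.sum_add_distrib, Finset.sum_const, Finset.card_univ, Fintype.card_fin,
      ← Finset.mul_sum]
  rw [show (∑ i, (x.1 i)^2) = aF x from rfl]
  rw [sum_z_w hJ, sum_S_w hJ]
  rw [Finset.sum_comm]
  simp_rw [sum_tF_sq hJ]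
  rw [Finset.sum_const, Finset.card_univ, Fintype.card_fin]
  have hnorm : ‖x.1‖ ^ p = aF x ^ (p/2) := by
    rw [aF_eq x, ← Real.rpow_natCast ‖x.1‖ 2, ← Real.rpow_mul (norm_nonneg _)]
    congr 1
    push_cast
    ring
  rw [hnorm, gaugeN_eq x] at *
  have hkey := final_algebra p (aF x) (bF x) (deriv F (rhoF x ^ ((1:ℝ)/4)))
    (deriv (deriv F) (rhoF x ^ ((1:ℝ)/4))) (m:ℝ) (k:ℝ) (rhoF x) hp hA (bF_nonneg x) hF' rfl
  push_cast
  linear_combination hkey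

end
end

section
/- Let 1 < p < ∞, R > 0, Q = m + 2k, and define f(z,σ) = ((p−1)/(2p(Q+p)^{1/(p−1)})) · ( R^{2p/(p−1)} − N(z,σ)^{2p/(p−1)} ) on ℝ^m × ℝ^k, where N(z,σ) = (|z|⁴ + 16|σ|²)^{1/4}. Then: (i) at every point (z,σ) with z ≠ 0 one has Δ_{H,p} f(z,σ) = −|z|^p; (ii) f(z,σ) = 0 whenever N(z,σ) = R and f(z,σ) > 0 whenever N(z,σ) < R; (iii) at every point with N(z,σ) = R one has |∇_H f(z,σ)| = c|z| with c = (R²/(Q+p))^{1/(p−1)}. -/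
open scoped BigOperators
open Matrix

noncomputable section

variable {m k : ℕ}

/-! ### Auxiliary machinery -/

section AuxMachinery

/-- coordinate CLM on first factor -/
def pz (i : Fin m) : Pt m k →L[ℝ] ℝ :=
  (EuclideanSpace.proj i).comp
    (ContinuousLinearMap.fst ℝ (EuclideanSpace ℝ (Fin m)) (EuclideanSpace ℝ (Fin k)))

def ps (ℓ : Fin k) : Pt m k →L[ℝ] ℝ :=
  (EuclideanSpace.proj ℓ).comp
    (ContinuousLinearMap.snd ℝ (EuclideanSpace ℝ (Fin m)) (EuclideanSpace ℝ (Fin k)))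

@[simp] lemma pz_apply (i : Fin m) (v : Pt m k) : pz i v = v.1 i := rfl
@[simp] lemma ps_apply (ℓ : Fin k) (v : Pt m k) : ps ℓ v = v.2 ℓ := rfl

def ez (m k : ℕ) (i : Fin m) : Pt m k := (EuclideanSpace.single i 1, 0)
def es (m k : ℕ) (ℓ : Fin k) : Pt m k := (0, EuclideanSpace.single ℓ 1)

def S1 (x : Pt m k) : ℝ := ∑ i, x.1 i ^ 2
def S2 (x : Pt m k) : ℝ := ∑ ℓ, x.2 ℓ ^ 2
def uu (x : Pt m k) : ℝ := S1 x ^ 2 + 16 * S2 x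
def ww (J : Fin k → Matrix (Fin m) (Fin m) ℝ) (i : Fin m) (x : Pt m k) : ℝ :=
  S1 x * x.1 i + 4 * ∑ ℓ, x.2 ℓ * (∑ j, J ℓ i j * x.1 j)

lemma S1_eq_norm (x : Pt m k) : S1 x = ‖x.1‖ ^ 2 := by
  rw [EuclideanSpace.norm_eq, Real.sq_sqrt (by positivity)]
  simp [S1, sq_abs]

lemma S2_eq_norm (x : Pt m k) : S2 x = ‖x.2‖ ^ 2 := by
  rw [EuclideanSpace.norm_eq, Real.sq_sqrt (by positivity)]
  simp [S2, sq_abs]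

lemma S1_nonneg (x : Pt m k) : 0 ≤ S1 x := by rw [S1_eq_norm]; positivity
lemma S2_nonneg (x : Pt m k) : 0 ≤ S2 x := by rw [S2_eq_norm]; positivity
lemma uu_nonneg (x : Pt m k) : 0 ≤ uu x := by
  have h1 := S1_nonneg x; have h2 := S2_nonneg x; unfold uu; nlinarith

lemma S1_pos (x : Pt m k) (hx : x.1 ≠ 0) : 0 < S1 x := by
  rw [S1_eq_norm]; exact pow_pos (norm_pos_iff.mpr hx) 2

lemma uu_pos (x : Pt m k) (hx : x ≠ 0) : 0 < uu x := by
  have h : x.1 ≠ 0 ∨ x.2 ≠ 0 := by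
    by_contra hc
    push_neg at hc
    exact hx (Prod.ext hc.1 hc.2)
  unfold uu
  rcases h with h1 | h2
  · have := S1_pos x h1; have := S2_nonneg x; nlinarith
  · have h2' : 0 < S2 x := by
      rw [S2_eq_norm]; exact pow_pos (norm_pos_iff.mpr h2) 2
    have := S1_nonneg x; nlinarith

lemma uu_eq (x : Pt m k) : uu x = ‖x.1‖ ^ 4 + 16 * ‖x.2‖ ^ 2 := by
  rw [uu, S1_eq_norm, S2_eq_norm]; ring

/-! derivative CLMs -/

def DS1c (x : Pt m k) : Pt m k →L[ℝ] ℝ := ∑ i : Fin m, (2 * x.1 i) • (pz i : Pt m k →L[ℝ] ℝ)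
def DS2c (x : Pt m k) : Pt m k →L[ℝ] ℝ := ∑ ℓ : Fin k, (2 * x.2 ℓ) • (ps ℓ : Pt m k →L[ℝ] ℝ)
def Duu (x : Pt m k) : Pt m k →L[ℝ] ℝ := (2 * S1 x) • DS1c x + (16:ℝ) • DS2c x

lemma DS1_ez (x : Pt m k) (j : Fin m) : DS1c x (ez m k j) = 2 * x.1 j := by
  simp [DS1c, ContinuousLinearMap.sum_apply, ez, EuclideanSpace.single_apply,
    mul_ite, mul_zero, mul_one, Finset.sum_ite_eq']

lemma DS1_es (x : Pt m k) (ℓ : Fin k) : DS1c x (es m k ℓ) = 0 := by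
  simp [DS1c, ContinuousLinearMap.sum_apply, es]

lemma DS2_ez (x : Pt m k) (j : Fin m) : DS2c x (ez m k j) = 0 := by
  simp [DS2c, ContinuousLinearMap.sum_apply, ez]

lemma DS2_es (x : Pt m k) (ℓ' : Fin k) : DS2c x (es m k ℓ') = 2 * x.2 ℓ' := by
  simp [DS2c, ContinuousLinearMap.sum_apply, es, EuclideanSpace.single_apply,
    mul_ite, mul_zero, mul_one, Finset.sum_ite_eq']

lemma S1_hasFDeriv (x : Pt m k) : HasFDerivAt S1 (DS1c x) x := by
  have h : ∀ i ∈ Finset.univ, HasFDerivAt (fun y : Pt m k => y.1 i ^ 2)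
      ((2 * x.1 i) • (pz i : Pt m k →L[ℝ] ℝ)) x := by
    intro i _
    have h1 := (pz (m := m) (k := k) i).hasFDerivAt (x := x)
    have h2 := h1.mul h1
    have hfun : (fun y : Pt m k => y.1 i ^ 2) = fun y => (pz i) y * (pz i) y := by
      funext y; simp [sq]
    rw [hfun, two_mul, add_smul]
    exact h2
  exact HasFDerivAt.fun_sum h

lemma S2_hasFDeriv (x : Pt m k) : HasFDerivAt S2 (DS2c x) x := by
  have h : ∀ ℓ ∈ Finset.univ, HasFDerivAt (fun y : Pt m k => y.2 ℓ ^ 2)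
      ((2 * x.2 ℓ) • (ps ℓ : Pt m k →L[ℝ] ℝ)) x := by
    intro ℓ _
    have h1 := (ps (m := m) (k := k) ℓ).hasFDerivAt (x := x)
    have h2 := h1.mul h1
    have hfun : (fun y : Pt m k => y.2 ℓ ^ 2) = fun y => (ps ℓ) y * (ps ℓ) y := by
      funext y; simp [sq]
    rw [hfun, two_mul, add_smul]
    exact h2
  exact HasFDerivAt.fun_sum h

lemma Duu_ez (x : Pt m k) (j : Fin m) : Duu x (ez m k j) = 4 * S1 x * x.1 j := by
  simp only [Duu, ContinuousLinearMap.add_apply, ContinuousLinearMap.coe_smul',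
    Pi.smul_apply, smul_eq_mul, DS1_ez, DS2_ez]
  ring

lemma Duu_es (x : Pt m k) (ℓ : Fin k) : Duu x (es m k ℓ) = 32 * x.2 ℓ := by
  simp only [Duu, ContinuousLinearMap.add_apply, ContinuousLinearMap.coe_smul',
    Pi.smul_apply, smul_eq_mul, DS1_es, DS2_es]
  ring

lemma uu_hasFDeriv (x : Pt m k) : HasFDerivAt uu (Duu x) x := by
  have h1 := (S1_hasFDeriv x).mul (S1_hasFDeriv x)
  have h2 := (S2_hasFDeriv x).const_mul (16:ℝ)
  have h3 := h1.add h2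
  have hfun : (uu : Pt m k → ℝ) = fun y => S1 y * S1 y + 16 * S2 y := by
    funext y; simp [uu, sq]
  rw [hfun]
  have hclm : (Duu x : Pt m k →L[ℝ] ℝ)
      = (S1 x • DS1c x + S1 x • DS1c x) + (16:ℝ) • DS2c x := by
    rw [Duu, two_mul, add_smul]
  rw [hclm]
  exact h3

lemma g_hasFDeriv {x : Pt m k} (C c1 e : ℝ) (hu : uu x ≠ 0) :
    HasFDerivAt (fun y : Pt m k => c1 - C * uu y ^ e)
      ((-(C * (e * uu x ^ (e - 1)))) • Duu x) x := by
  have h1 := (uu_hasFDeriv x).rpow_const (p := e) (Or.inl hu)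
  have h2 := h1.const_mul C
  have h3 := h2.const_sub c1
  have hclm : ((-(C * (e * uu x ^ (e - 1)))) • Duu x : Pt m k →L[ℝ] ℝ)
      = -(C • (e * uu x ^ (e - 1)) • Duu x) := by
    module
  rw [hclm]
  exact h3

lemma XD_g {x : Pt m k} (J : Fin k → Matrix (Fin m) (Fin m) ℝ)
    (C c1 e : ℝ) (hu : uu x ≠ 0) (i : Fin m) :
    XD J (fun y : Pt m k => c1 - C * uu y ^ e) i x
      = -(4 * C * e) * uu x ^ (e - 1) * ww J i x := by
  unfold XD
  rw [(g_hasFDeriv C c1 e hu).fderiv]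
  have hez : ∀ i : Fin m, ((EuclideanSpace.single i 1 : EuclideanSpace ℝ (Fin m)),
      (0 : EuclideanSpace ℝ (Fin k))) = ez m k i := fun _ => rfl
  have hes : ∀ ℓ : Fin k, ((0 : EuclideanSpace ℝ (Fin m)),
      (EuclideanSpace.single ℓ 1 : EuclideanSpace ℝ (Fin k))) = es m k ℓ := fun _ => rfl
  simp only [hez, hes, ContinuousLinearMap.coe_smul', Pi.smul_apply, Duu_ez, Duu_es,
    smul_eq_mul]
  rw [ww]
  have hsum : ∑ ℓ : Fin k, (∑ j : Fin m, J ℓ i j * x.1 j) * (-(C * (e * uu x ^ (e - 1))) * (32 * x.2 ℓ))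
      = (-(32 * C * e) * uu x ^ (e-1)) * ∑ ℓ : Fin k, x.2 ℓ * (∑ j : Fin m, J ℓ i j * x.1 j) := by
    rw [Finset.mul_sum]
    exact Finset.sum_congr rfl fun ℓ _ => by ring
  rw [hsum]
  ring

end AuxMachinery

section AuxAlgebra

lemma skew_entry {A : Matrix (Fin m) (Fin m) ℝ} (h : Aᵀ = -A) (i j : Fin m) :
    A j i = -A i j := by
  have := congrFun (congrFun h i) j
  rw [Matrix.transpose_apply, Matrix.neg_apply] at this
  exact this

lemma skew_diag {A : Matrix (Fin m) (Fin m) ℝ} (h : Aᵀ = -A) (i : Fin m) : A i i = 0 := by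
  have := skew_entry h i i; linarith

lemma skew_quad {A : Matrix (Fin m) (Fin m) ℝ} (h : Aᵀ = -A) (z : Fin m → ℝ) :
    ∑ i, z i * (∑ j, A i j * z j) = 0 := by
  have hT : (∑ i, z i * (∑ j, A i j * z j)) = -∑ i, z i * (∑ j, A i j * z j) := by
    calc ∑ i, z i * (∑ j, A i j * z j)
        = ∑ i, ∑ j, z i * (A i j * z j) := by
          exact Finset.sum_congr rfl fun i _ => Finset.mul_sum _ _ _
      _ = ∑ j, ∑ i, z i * (A i j * z j) := Finset.sum_comm
      _ = ∑ j, -(z j * (∑ i, A j i * z i)) := by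
          refine Finset.sum_congr rfl fun j _ => ?_
          rw [Finset.mul_sum, ← Finset.sum_neg_distrib]
          refine Finset.sum_congr rfl fun i _ => ?_
          rw [skew_entry h j i]; ring
      _ = -∑ j, z j * (∑ i, A j i * z i) := by rw [Finset.sum_neg_distrib]
  linarith

lemma pair_quad {J : Fin k → Matrix (Fin m) (Fin m) ℝ} (hJ : HType J)
    (z : Fin m → ℝ) (a b : Fin k) :
    ∑ i, (∑ j, J a i j * z j) * (∑ j, J b i j * z j)
      = (if a = b then 1 else 0) * ∑ j, z j ^ 2 := by
  have hmul : ∀ a b : Fin k, (∑ i, (∑ j, J a i j * z j) * (∑ j, J b i j * z j))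
      = -∑ j, ∑ j', (J a * J b) j j' * (z j * z j') := by
    intro a b
    calc ∑ i, (∑ j, J a i j * z j) * (∑ j', J b i j' * z j')
        = ∑ i, ∑ j, ∑ j', (J a i j * z j) * (J b i j' * z j') := by
          refine Finset.sum_congr rfl fun i _ => ?_
          rw [Finset.sum_mul_sum]
      _ = ∑ j, ∑ i, ∑ j', (J a i j * z j) * (J b i j' * z j') := Finset.sum_comm
      _ = ∑ j, ∑ j', ∑ i, (J a i j * z j) * (J b i j' * z j') := by
          exact Finset.sum_congr rfl fun j _ => Finset.sum_comm
      _ = ∑ j, ∑ j', (∑ i, J a i j * J b i j') * (z j * z j') := by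
          refine Finset.sum_congr rfl fun j _ => Finset.sum_congr rfl fun j' _ => ?_
          rw [Finset.sum_mul]
          exact Finset.sum_congr rfl fun i _ => by ring
      _ = ∑ j, ∑ j', (-(J a * J b) j j') * (z j * z j') := by
          refine Finset.sum_congr rfl fun j _ => Finset.sum_congr rfl fun j' _ => ?_
          congr 1
          have h1 : ∀ i, J a i j = (J a)ᵀ j i := fun i => (Matrix.transpose_apply _ _ _).symm
          calc ∑ i, J a i j * J b i j' = ∑ i, (J a)ᵀ j i * J b i j' := by
                exact Finset.sum_congr rfl fun i _ => by rw [h1 i]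
            _ = ((J a)ᵀ * J b) j j' := (Matrix.mul_apply).symm
            _ = -(J a * J b) j j' := by rw [hJ.1 a, Matrix.neg_mul, Matrix.neg_apply]
      _ = -∑ j, ∑ j', (J a * J b) j j' * (z j * z j') := by
          rw [← Finset.sum_neg_distrib]
          exact Finset.sum_congr rfl fun j _ => by
            rw [← Finset.sum_neg_distrib]
            exact Finset.sum_congr rfl fun j' _ => by ring
  have hsymm : (∑ i, (∑ j, J a i j * z j) * (∑ j, J b i j * z j))
      = ∑ i, (∑ j, J b i j * z j) * (∑ j, J a i j * z j) :=
    Finset.sum_congr rfl fun i _ => mul_comm _ _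
  have hsum : ∑ j, ∑ j', ((J a * J b) j j' + (J b * J a) j j') * (z j * z j')
      = (if a = b then (-2:ℝ) else 0) * ∑ j, z j ^ 2 := by
    have hcl := hJ.2 a b
    calc ∑ j, ∑ j', ((J a * J b) j j' + (J b * J a) j j') * (z j * z j')
        = ∑ j, ∑ j', ((J a * J b + J b * J a) j j') * (z j * z j') := by
          exact Finset.sum_congr rfl fun j _ => Finset.sum_congr rfl fun j' _ => by
            rw [Matrix.add_apply]
      _ = ∑ j, ∑ j', ((if a = b then (-2:ℝ) else 0) * (if j = j' then (1:ℝ) else 0)) * (z j * z j') := by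
          rw [hcl]
          exact Finset.sum_congr rfl fun j _ => Finset.sum_congr rfl fun j' _ => by
            rw [Matrix.smul_apply, Matrix.one_apply, smul_eq_mul]
      _ = (if a = b then (-2:ℝ) else 0) * ∑ j, z j ^ 2 := by
          rw [Finset.mul_sum]
          refine Finset.sum_congr rfl fun j _ => ?_
          rw [Finset.sum_eq_single j]
          · simp [sq]
          · intro j' _ hne; simp [Ne.symm hne]
          · intro h; exact absurd (Finset.mem_univ j) h
  have e1 := hmul a b
  have e2 := hmul b a
  have hsplit : ∑ j, ∑ j', ((J a * J b) j j' + (J b * J a) j j') * (z j * z j')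
      = (∑ j, ∑ j', (J a * J b) j j' * (z j * z j'))
        + (∑ j, ∑ j', (J b * J a) j j' * (z j * z j')) := by
    rw [← Finset.sum_add_distrib]
    exact Finset.sum_congr rfl fun j _ => by
      rw [← Finset.sum_add_distrib]
      exact Finset.sum_congr rfl fun j' _ => by ring
  rw [hsplit] at hsum
  by_cases hab : a = b
  · simp only [hab, if_true] at *
    linarith [e1, e2, hsum, hsymm]
  · simp only [hab, if_false] at *
    rw [hsymm] at e1
    rw [e2] at e1
    have : ∑ j, ∑ j', (J b * J a) j j' * (z j * z j') = 0 := by linarith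
    rw [hsymm, e2, this]
    simp
end AuxAlgebra

section AuxSums
variable {J : Fin k → Matrix (Fin m) (Fin m) ℝ}

lemma sum_z_ww (hJ : HType J) (x : Pt m k) :
    ∑ i, x.1 i * ww J i x = S1 x ^ 2 := by
  have h0 : ∀ ℓ, ∑ i, x.1 i * (∑ j, J ℓ i j * x.1 j) = 0 := fun ℓ => skew_quad (hJ.1 ℓ) x.1
  calc ∑ i, x.1 i * ww J i x
      = ∑ i, (S1 x * x.1 i ^ 2 + ∑ ℓ, (4 * x.2 ℓ) * (x.1 i * (∑ j, J ℓ i j * x.1 j))) := by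
        refine Finset.sum_congr rfl fun i _ => ?_
        rw [ww, mul_add]
        congr 1
        · ring
        · rw [Finset.mul_sum, Finset.mul_sum]
          exact Finset.sum_congr rfl fun ℓ _ => by ring
    _ = S1 x * S1 x + ∑ ℓ, (4 * x.2 ℓ) * (∑ i, x.1 i * (∑ j, J ℓ i j * x.1 j)) := by
        rw [Finset.sum_add_distrib]
        congr 1
        · rw [← Finset.mul_sum]; rfl
        · rw [Finset.sum_comm]
          exact Finset.sum_congr rfl fun ℓ _ => by rw [← Finset.mul_sum]
    _ = S1 x ^ 2 := by simp [h0, sq]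

lemma sum_sq_Jz (hJ : HType J) (x : Pt m k) :
    ∑ i, ∑ ℓ, (∑ j, J ℓ i j * x.1 j) ^ 2 = (k : ℝ) * S1 x := by
  rw [Finset.sum_comm]
  have h : ∀ ℓ : Fin k, ∑ i, (∑ j, J ℓ i j * x.1 j) ^ 2 = S1 x := by
    intro ℓ
    have := pair_quad hJ x.1 ℓ ℓ
    simp only [if_true, one_mul] at this
    calc ∑ i, (∑ j, J ℓ i j * x.1 j) ^ 2
        = ∑ i, (∑ j, J ℓ i j * x.1 j) * (∑ j, J ℓ i j * x.1 j) :=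
          Finset.sum_congr rfl fun i _ => sq _
      _ = ∑ j, x.1 j ^ 2 := this
      _ = S1 x := rfl
  rw [Finset.sum_congr rfl fun ℓ _ => h ℓ]
  simp [Finset.sum_const, mul_comm]

lemma sum_Jsz_sq (hJ : HType J) (x : Pt m k) :
    ∑ i, (∑ ℓ, x.2 ℓ * (∑ j, J ℓ i j * x.1 j)) ^ 2 = S2 x * S1 x := by
  calc ∑ i, (∑ ℓ, x.2 ℓ * (∑ j, J ℓ i j * x.1 j)) ^ 2
      = ∑ i, ∑ ℓ, ∑ ℓ', (x.2 ℓ * x.2 ℓ') *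
          ((∑ j, J ℓ i j * x.1 j) * (∑ j, J ℓ' i j * x.1 j)) := by
        refine Finset.sum_congr rfl fun i _ => ?_
        rw [sq, Finset.sum_mul_sum]
        exact Finset.sum_congr rfl fun ℓ _ => Finset.sum_congr rfl fun ℓ' _ => by ring
    _ = ∑ ℓ, ∑ ℓ', (x.2 ℓ * x.2 ℓ') *
          (∑ i, (∑ j, J ℓ i j * x.1 j) * (∑ j, J ℓ' i j * x.1 j)) := by
        rw [Finset.sum_comm]
        refine Finset.sum_congr rfl fun ℓ _ => ?_
        rw [Finset.sum_comm]
        exact Finset.sum_congr rfl fun ℓ' _ => by rw [← Finset.mul_sum]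
    _ = ∑ ℓ, ∑ ℓ', (x.2 ℓ * x.2 ℓ') * ((if ℓ = ℓ' then (1:ℝ) else 0) * S1 x) := by
        exact Finset.sum_congr rfl fun ℓ _ => Finset.sum_congr rfl fun ℓ' _ => by
          rw [pair_quad hJ x.1 ℓ ℓ']; rfl
    _ = ∑ ℓ, x.2 ℓ ^ 2 * S1 x := by
        refine Finset.sum_congr rfl fun ℓ _ => ?_
        rw [Finset.sum_eq_single ℓ]
        · simp [sq]
        · intro ℓ' _ hne; simp [Ne.symm hne]
        · intro h; exact absurd (Finset.mem_univ ℓ) h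
    _ = S2 x * S1 x := by rw [← Finset.sum_mul]; rfl

lemma sum_ww_sq (hJ : HType J) (x : Pt m k) :
    ∑ i, (ww J i x) ^ 2 = S1 x * uu x := by
  have h0 : ∀ ℓ, ∑ i, x.1 i * (∑ j, J ℓ i j * x.1 j) = 0 := fun ℓ => skew_quad (hJ.1 ℓ) x.1
  have hcross : ∑ i, x.1 i * (∑ ℓ, x.2 ℓ * (∑ j, J ℓ i j * x.1 j)) = 0 := by
    calc ∑ i, x.1 i * (∑ ℓ, x.2 ℓ * (∑ j, J ℓ i j * x.1 j))
        = ∑ i, ∑ ℓ, x.2 ℓ * (x.1 i * (∑ j, J ℓ i j * x.1 j)) := by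
          refine Finset.sum_congr rfl fun i _ => ?_
          rw [Finset.mul_sum]
          exact Finset.sum_congr rfl fun ℓ _ => by ring
      _ = ∑ ℓ, x.2 ℓ * ∑ i, (x.1 i * (∑ j, J ℓ i j * x.1 j)) := by
          rw [Finset.sum_comm]
          exact Finset.sum_congr rfl fun ℓ _ => by rw [← Finset.mul_sum]
      _ = 0 := by simp [h0]
  calc ∑ i, (ww J i x) ^ 2
      = ∑ i, (S1 x ^ 2 * x.1 i ^ 2
          + 8 * S1 x * (x.1 i * (∑ ℓ, x.2 ℓ * (∑ j, J ℓ i j * x.1 j)))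
          + 16 * (∑ ℓ, x.2 ℓ * (∑ j, J ℓ i j * x.1 j)) ^ 2) := by
        refine Finset.sum_congr rfl fun i _ => ?_
        rw [ww]; ring
    _ = S1 x ^ 2 * S1 x + 8 * S1 x * 0 + 16 * (S2 x * S1 x) := by
        rw [Finset.sum_add_distrib, Finset.sum_add_distrib, ← Finset.mul_sum,
          ← Finset.mul_sum, ← Finset.mul_sum, hcross, sum_Jsz_sq hJ x]
        rfl
    _ = S1 x * uu x := by rw [uu]; ring

end AuxSums

section AuxMain
variable {J : Fin k → Matrix (Fin m) (Fin m) ℝ}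

lemma hGradSq_g (hJ : HType J) (C c1 e : ℝ) {x : Pt m k} (hu : uu x ≠ 0) :
    hGradSq J (fun y : Pt m k => c1 - C * uu y ^ e) x
      = (4*C*e) * (4*C*e) * (uu x ^ (e-1) * uu x ^ (e-1) * (S1 x * uu x)) := by
  unfold hGradSq
  calc ∑ i, (XD J (fun y : Pt m k => c1 - C * uu y ^ e) i x) ^ 2
      = ∑ i, ((4*C*e) * (4*C*e) * (uu x ^ (e-1) * uu x ^ (e-1))) * (ww J i x) ^ 2 := by
        refine Finset.sum_congr rfl fun i _ => ?_
        rw [XD_g J C c1 e hu i]; ring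
    _ = ((4*C*e) * (4*C*e) * (uu x ^ (e-1) * uu x ^ (e-1))) * ∑ i, (ww J i x) ^ 2 := by
        rw [← Finset.mul_sum]
    _ = (4*C*e) * (4*C*e) * (uu x ^ (e-1) * uu x ^ (e-1) * (S1 x * uu x)) := by
        rw [sum_ww_sq hJ x]; ring

lemma rpow_magic {B U S Wv q e : ℝ} (hB : 0 < B) (hU : 0 < U) (hS : 0 < S)
    (h1 : ((e-1)+(e-1)+1)*q + (e-1) = 0) :
    (B * B * (U^(e-1) * U^(e-1) * (S * U)))^q * (-(B) * U^(e-1) * Wv)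
      = -(B^(2*q+1) * (S^q * Wv)) := by
  have hUp : (0:ℝ) < U ^ (e-1) := Real.rpow_pos_of_pos hU _
  have h2 : U^(e-1) * U^(e-1) = U^((e-1)+(e-1)) := (Real.rpow_add hU _ _).symm
  have h3 : U^((e-1)+(e-1)) * U = U^((e-1)+(e-1)+1) := by
    rw [Real.rpow_add_one hU.ne' ((e-1)+(e-1))]
  have hin : B * B * (U^(e-1) * U^(e-1) * (S * U))
      = (B*B) * S * (U^((e-1)+(e-1)+1)) := by
    rw [← h3, ← h2]; ring
  rw [hin]
  have hsplit : ((B*B) * S * (U^((e-1)+(e-1)+1)))^q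
      = (B^q * B^q) * S^q * U^(((e-1)+(e-1)+1)*q) := by
    rw [Real.mul_rpow (by positivity) (by positivity),
        Real.mul_rpow (by positivity) hS.le,
        Real.mul_rpow hB.le hB.le,
        ← Real.rpow_mul hU.le]
  rw [hsplit]
  have hBq : B^q * B^q * B = B^(2*q+1) := by
    rw [← Real.rpow_add hB, ← Real.rpow_add_one hB.ne']
    ring_nf
  have hUq : U^(((e-1)+(e-1)+1)*q) * U^(e-1) = 1 := by
    rw [← Real.rpow_add hU, h1, Real.rpow_zero]
  calc (B^q * B^q) * S^q * U^(((e-1)+(e-1)+1)*q) * (-(B) * U^(e-1) * Wv)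
      = -((B^q * B^q * B) * S^q * (U^(((e-1)+(e-1)+1)*q) * U^(e-1)) * Wv) := by ring
    _ = -(B^(2*q+1) * (S^q * Wv)) := by rw [hBq, hUq]; ring

/-- derivative of ww -/
def Dww (J : Fin k → Matrix (Fin m) (Fin m) ℝ) (i : Fin m) (x : Pt m k) : Pt m k →L[ℝ] ℝ :=
  (S1 x • (pz i : Pt m k →L[ℝ] ℝ) + x.1 i • DS1c x)
    + (4:ℝ) • (∑ ℓ : Fin k, (x.2 ℓ • (∑ j : Fin m, (J ℓ i j) • (pz j : Pt m k →L[ℝ] ℝ))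
        + (∑ j, J ℓ i j * x.1 j) • (ps ℓ : Pt m k →L[ℝ] ℝ)))

lemma ww_hasFDeriv (i : Fin m) (x : Pt m k) : HasFDerivAt (ww J i) (Dww J i x) x := by
  have h1 : HasFDerivAt (fun y : Pt m k => S1 y * y.1 i)
      (S1 x • (pz i : Pt m k →L[ℝ] ℝ) + x.1 i • DS1c x) x := by
    have := (S1_hasFDeriv x).mul ((pz (m := m) (k := k) i).hasFDerivAt (x := x))
    exact this
  have h2 : ∀ ℓ : Fin k, HasFDerivAt (fun y : Pt m k => y.2 ℓ * (∑ j, J ℓ i j * y.1 j))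
      (x.2 ℓ • (∑ j : Fin m, (J ℓ i j) • (pz j : Pt m k →L[ℝ] ℝ))
        + (∑ j, J ℓ i j * x.1 j) • (ps ℓ : Pt m k →L[ℝ] ℝ)) x := by
    intro ℓ
    have hA := (ps (m := m) (k := k) ℓ).hasFDerivAt (x := x)
    have hB : HasFDerivAt (fun y : Pt m k => ∑ j, J ℓ i j * y.1 j)
        (∑ j : Fin m, (J ℓ i j) • (pz j : Pt m k →L[ℝ] ℝ)) x := by
      refine HasFDerivAt.fun_sum fun j _ => ?_
      have := ((pz (m := m) (k := k) j).hasFDerivAt (x := x)).const_mul (J ℓ i j)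
      simpa [smul_smul] using this
    have := hA.mul hB
    exact this
  have h3 : HasFDerivAt (fun y : Pt m k => ∑ ℓ, y.2 ℓ * (∑ j, J ℓ i j * y.1 j))
      (∑ ℓ : Fin k, (x.2 ℓ • (∑ j : Fin m, (J ℓ i j) • (pz j : Pt m k →L[ℝ] ℝ))
        + (∑ j, J ℓ i j * x.1 j) • (ps ℓ : Pt m k →L[ℝ] ℝ))) x :=
    HasFDerivAt.fun_sum fun ℓ _ => h2 ℓ
  have h4 := h3.const_mul (4:ℝ)
  have h5 := h1.add h4
  have hfun : (ww J i : Pt m k → ℝ)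
      = fun y => S1 y * y.1 i + 4 * ∑ ℓ, y.2 ℓ * (∑ j, J ℓ i j * y.1 j) := rfl
  rw [hfun, Dww]
  exact h5

lemma Dww_ez (i : Fin m) (x : Pt m k) :
    Dww J i x (ez m k i) = S1 x + 2 * x.1 i ^ 2 + 4 * ∑ ℓ, x.2 ℓ * J ℓ i i := by
  simp only [Dww, ContinuousLinearMap.add_apply, ContinuousLinearMap.coe_smul',
    Pi.smul_apply, ContinuousLinearMap.sum_apply, smul_eq_mul, DS1_ez, pz_apply, ps_apply]
  have hz : ∀ j : Fin m, (ez m k i).1 j = if j = i then 1 else 0 := by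
    intro j; simp [ez, EuclideanSpace.single_apply]
  have hs : ∀ ℓ : Fin k, (ez m k i).2 ℓ = 0 := by intro ℓ; simp [ez]
  simp only [hz, hs, mul_zero, zero_mul, add_zero, mul_ite, mul_one,
    Finset.sum_ite_eq', Finset.mem_univ, if_true]
  ring

lemma Dww_es (i : Fin m) (x : Pt m k) (ℓ0 : Fin k) :
    Dww J i x (es m k ℓ0) = 4 * ∑ j, J ℓ0 i j * x.1 j := by
  simp only [Dww, ContinuousLinearMap.add_apply, ContinuousLinearMap.coe_smul',
    Pi.smul_apply, ContinuousLinearMap.sum_apply, smul_eq_mul, DS1_es, pz_apply, ps_apply]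
  have hz : ∀ j : Fin m, (es m k ℓ0).1 j = 0 := by intro j; simp [es]
  have hs : ∀ ℓ : Fin k, (es m k ℓ0).2 ℓ = if ℓ = ℓ0 then 1 else 0 := by
    intro ℓ; simp [es, EuclideanSpace.single_apply]
  simp only [hz, hs, mul_zero, zero_mul, add_zero, zero_add, mul_ite, mul_one,
    Finset.sum_ite_eq', Finset.mem_univ, if_true, Finset.mul_sum]
  simp [Finset.mul_sum]

lemma XD_phi (i : Fin m) {x : Pt m k} (hx : x.1 ≠ 0) (K q : ℝ) :
    XD J (fun y : Pt m k => (-(K)) * (S1 y ^ q * ww J i y)) i x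
      = (-(K)) * (S1 x ^ q * (S1 x + 2 * x.1 i ^ 2 + 4 * ∑ ℓ, x.2 ℓ * J ℓ i i)
          + ww J i x * (q * S1 x ^ (q-1) * (2 * x.1 i))
          + 2 * S1 x ^ q * ∑ ℓ, (∑ j, J ℓ i j * x.1 j) ^ 2) := by
  have hS := S1_pos x hx
  have hrw := (S1_hasFDeriv x).rpow_const (p := q) (Or.inl hS.ne')
  have hmul := hrw.mul (ww_hasFDeriv (J := J) i x)
  have hphi := hmul.const_mul (-(K))
  unfold XD
  rw [HasFDerivAt.fderiv (f := fun y : Pt m k => (-(K)) * (S1 y ^ q * ww J i y)) hphi]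
  have hez : ∀ i : Fin m, ((EuclideanSpace.single i 1 : EuclideanSpace ℝ (Fin m)),
      (0 : EuclideanSpace ℝ (Fin k))) = ez m k i := fun _ => rfl
  have hes : ∀ ℓ : Fin k, ((0 : EuclideanSpace ℝ (Fin m)),
      (EuclideanSpace.single ℓ 1 : EuclideanSpace ℝ (Fin k))) = es m k ℓ := fun _ => rfl
  simp only [hez, hes, ContinuousLinearMap.coe_smul', Pi.smul_apply,
    ContinuousLinearMap.add_apply, smul_eq_mul, Dww_ez, Dww_es, DS1_ez, DS1_es]
  have hsum : ∑ ℓ : Fin k, (∑ j : Fin m, J ℓ i j * x.1 j) *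
        (-K * (S1 x ^ q * (4 * ∑ j, J ℓ i j * x.1 j) + ww J i x * (q * S1 x ^ (q-1) * 0)))
      = (-K * (4 * S1 x ^ q)) * ∑ ℓ : Fin k, (∑ j, J ℓ i j * x.1 j) ^ 2 := by
    rw [Finset.mul_sum]
    exact Finset.sum_congr rfl fun ℓ _ => by ring
  rw [hsum]
  ring

end AuxMain

section AuxAssemble
variable {J : Fin k → Matrix (Fin m) (Fin m) ℝ}

lemma XD_congr_fderiv (J : Fin k → Matrix (Fin m) (Fin m) ℝ) (i : Fin m)
    {f g : Pt m k → ℝ} {x : Pt m k} (h : fderiv ℝ f x = fderiv ℝ g x) :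
    XD J f i x = XD J g i x := by
  unfold XD; rw [h]

lemma hPLap_g (hJ : HType J) (p C c1 e : ℝ) (hB : 0 < 4*C*e)
    (h1 : ((e-1)+(e-1)+1)*((p-2)/2) + (e-1) = 0) {x : Pt m k} (hx : x.1 ≠ 0) :
    hPLap J p (fun y : Pt m k => c1 - C * uu y ^ e) x
      = -((4*C*e)^(2*((p-2)/2)+1) *
          (((m:ℝ) + 2*(k:ℝ) + 2 + 2*((p-2)/2)) * (S1 x ^ ((p-2)/2) * S1 x))) := by
  have hS := S1_pos x hx
  have hne : ∀ y : Pt m k, y.1 ≠ 0 → 0 < uu y := by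
    intro y hy
    refine uu_pos y fun h0 => hy ?_
    rw [h0]; rfl
  have hOpen : IsOpen {y : Pt m k | y.1 ≠ 0} :=
    isOpen_ne.preimage (continuous_fst : Continuous (Prod.fst : Pt m k → _))
  have hmem : {y : Pt m k | y.1 ≠ 0} ∈ nhds x := hOpen.mem_nhds hx
  set K : ℝ := (4*C*e)^(2*((p-2)/2)+1) with hKdef
  have hEv : ∀ i : Fin m,
      (fun y : Pt m k => hGradSq J (fun y => c1 - C * uu y ^ e) y ^ ((p - 2) / 2)
          * XD J (fun y => c1 - C * uu y ^ e) i y)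
        =ᶠ[nhds x] (fun y : Pt m k => (-(K)) * (S1 y ^ ((p-2)/2) * ww J i y)) := by
    intro i
    refine Filter.eventuallyEq_of_mem hmem fun y hy => ?_
    have hy' : y.1 ≠ 0 := hy
    have hUy := hne y hy'
    have hSy := S1_pos y hy'
    rw [hGradSq_g hJ C c1 e hUy.ne', XD_g J C c1 e hUy.ne' i,
      rpow_magic hB hUy hSy h1]
    ring
  have hstep : ∀ i ∈ Finset.univ,
      XD J (fun y : Pt m k => hGradSq J (fun y => c1 - C * uu y ^ e) y ^ ((p - 2) / 2)
          * XD J (fun y => c1 - C * uu y ^ e) i y) i x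
        = (-(K)) * (S1 x ^ ((p-2)/2) * (S1 x + 2 * x.1 i ^ 2 + 4 * ∑ ℓ, x.2 ℓ * J ℓ i i)
            + ww J i x * (((p-2)/2) * S1 x ^ (((p-2)/2)-1) * (2 * x.1 i))
            + 2 * S1 x ^ ((p-2)/2) * ∑ ℓ, (∑ j, J ℓ i j * x.1 j) ^ 2) := by
    intro i _
    have ht : XD J (fun y : Pt m k => hGradSq J (fun y => c1 - C * uu y ^ e) y ^ ((p - 2) / 2)
          * XD J (fun y => c1 - C * uu y ^ e) i y) i x
        = XD J (fun y : Pt m k => (-(K)) * (S1 y ^ ((p-2)/2) * ww J i y)) i x :=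
      XD_congr_fderiv J i ((hEv i).fderiv_eq)
    rw [ht, XD_phi i hx K ((p-2)/2)]
  unfold hPLap
  rw [Finset.sum_congr rfl hstep]
  have hdiag : ∀ i : Fin m, ∑ ℓ, x.2 ℓ * J ℓ i i = 0 := by
    intro i
    refine Finset.sum_eq_zero fun ℓ _ => ?_
    rw [skew_diag (hJ.1 ℓ) i, mul_zero]
  have hq1 : S1 x ^ (((p-2)/2)-1) * S1 x = S1 x ^ ((p-2)/2) := by
    rw [← Real.rpow_add_one hS.ne', show ((p-2)/2)-1+1 = (p-2)/2 from by ring]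
  calc ∑ i, (-(K)) * (S1 x ^ ((p-2)/2) * (S1 x + 2 * x.1 i ^ 2 + 4 * ∑ ℓ, x.2 ℓ * J ℓ i i)
            + ww J i x * (((p-2)/2) * S1 x ^ (((p-2)/2)-1) * (2 * x.1 i))
            + 2 * S1 x ^ ((p-2)/2) * ∑ ℓ, (∑ j, J ℓ i j * x.1 j) ^ 2)
      = ∑ i, ((-(K)) * (S1 x ^ ((p-2)/2) * S1 x)
          + ((-(K)) * 2 * S1 x ^ ((p-2)/2)) * x.1 i ^ 2
          + ((-(K)) * 2 * ((p-2)/2) * S1 x ^ (((p-2)/2)-1)) * (x.1 i * ww J i x)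
          + ((-(K)) * 2 * S1 x ^ ((p-2)/2)) * ∑ ℓ, (∑ j, J ℓ i j * x.1 j) ^ 2) := by
        refine Finset.sum_congr rfl fun i _ => ?_
        rw [hdiag i]; ring
    _ = (m : ℝ) * ((-(K)) * (S1 x ^ ((p-2)/2) * S1 x))
          + ((-(K)) * 2 * S1 x ^ ((p-2)/2)) * S1 x
          + ((-(K)) * 2 * ((p-2)/2) * S1 x ^ (((p-2)/2)-1)) * S1 x ^ 2
          + ((-(K)) * 2 * S1 x ^ ((p-2)/2)) * ((k:ℝ) * S1 x) := by
        rw [Finset.sum_add_distrib, Finset.sum_add_distrib, Finset.sum_add_distrib,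
          Finset.sum_const, ← Finset.mul_sum, ← Finset.mul_sum, ← Finset.mul_sum,
          sum_z_ww hJ x, sum_sq_Jz hJ x]
        simp [nsmul_eq_mul]
        exact Or.inl rfl
    _ = -(K * (((m:ℝ) + 2*(k:ℝ) + 2 + 2*((p-2)/2)) * (S1 x ^ ((p-2)/2) * S1 x))) := by
        have h2 : S1 x ^ (((p-2)/2)-1) * S1 x ^ 2
            = S1 x ^ ((p-2)/2) * S1 x := by
          rw [sq, ← mul_assoc, hq1]
        linear_combination ((-(K)) * 2 * ((p-2)/2)) * h2

end AuxAssemble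
/-- the explicit function
f = ((p−1)/(2p(Q+p)^{1/(p−1)}))·(R^{2p/(p−1)} − N^{2p/(p−1)}) on ℝ^m × ℝ^k satisfies
(i) Δ_{H,p} f = −|z|^p away from {z = 0}; (ii) f = 0 on {N = R} and f > 0 on {N < R};
(iii) |∇_H f| = c|z| on {N = R} with c = (R²/(Q+p))^{1/(p−1)}, where Q = m+2k. -/
theorem dirichlet_solution_on_gauge_ball
    (hm : 1 ≤ m) (hk : 1 ≤ k)
    (J : Fin k → Matrix (Fin m) (Fin m) ℝ) (hJ : HType J)
    (p R : ℝ) (hp : 1 < p) (hR : 0 < R)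
    (f : Pt m k → ℝ)
    (hf : ∀ x : Pt m k, f x =
      ((p - 1) / (2 * p * (((m : ℝ) + 2 * k + p) ^ (1 / (p - 1))))) *
        (R ^ (2 * p / (p - 1)) - gaugeN x ^ (2 * p / (p - 1)))) :
    (∀ x : Pt m k, x.1 ≠ 0 → hPLap J p f x = -(‖x.1‖ ^ p)) ∧
    (∀ x : Pt m k, gaugeN x = R → f x = 0) ∧
    (∀ x : Pt m k, gaugeN x < R → 0 < f x) ∧
    (∀ x : Pt m k, gaugeN x = R →
      hGradNorm J f x = ((R ^ 2 / ((m : ℝ) + 2 * k + p)) ^ (1 / (p - 1))) * ‖x.1‖) := by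
  have hp1 : (0:ℝ) < p - 1 := by linarith
  have hp0 : (0:ℝ) < p := by linarith
  have hmk : (0:ℝ) ≤ (m:ℝ) + 2*k := by positivity
  have hQp : (0:ℝ) < (m:ℝ) + 2*k + p := by linarith
  set T : ℝ := ((m : ℝ) + 2 * k + p) ^ (1 / (p - 1)) with hTdef
  have hT : 0 < T := Real.rpow_pos_of_pos hQp _
  set Cc : ℝ := (p - 1) / (2 * p * T) with hCdef
  have hC : 0 < Cc := by rw [hCdef]; positivity
  set e : ℝ := ((1:ℝ)/4) * (2 * p / (p - 1)) with hedef
  have he : 0 < e := by rw [hedef]; positivity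
  set c1 : ℝ := Cc * R ^ (2 * p / (p - 1)) with hc1def
  have hB : 0 < 4 * Cc * e := by positivity
  have hTne := hT.ne'
  have hpne := hp0.ne'
  have hp1ne := hp1.ne'
  have hBval : 4 * Cc * e = T⁻¹ := by
    rw [hCdef, hedef]
    field_simp
  have hTpow : T ^ (p - 1) = (m:ℝ) + 2*k + p := by
    rw [hTdef, ← Real.rpow_mul hQp.le, one_div, inv_mul_cancel₀ hp1.ne', Real.rpow_one]
  have h1 : ((e-1)+(e-1)+1)*((p-2)/2) + (e-1) = 0 := by
    rw [hedef]; field_simp; ring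
  have hf' : f = fun y : Pt m k => c1 - Cc * uu y ^ e := by
    funext y
    rw [hf y]
    have hgy : gaugeN y ^ (2 * p / (p - 1)) = uu y ^ e := by
      rw [gaugeN, ← uu_eq, ← Real.rpow_mul (uu_nonneg y), ← hedef]
    rw [hgy, hc1def]; ring
  have hgN : ∀ y : Pt m k, gaugeN y = uu y ^ ((1:ℝ)/4) := by
    intro y; rw [gaugeN, uu_eq]
  refine ⟨?_, ?_, ?_, ?_⟩
  · -- part (i)
    intro x hx
    have hSx := S1_pos x hx
    rw [hf', hPLap_g hJ p Cc c1 e hB h1 hx]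
    have h2 : (4*Cc*e) ^ (2*((p-2)/2)+1) = ((m:ℝ) + 2*k + p)⁻¹ := by
      rw [hBval, show 2*((p-2)/2)+1 = p-1 from by ring, Real.inv_rpow hT.le, hTpow]
    have h3 : S1 x ^ ((p-2)/2) * S1 x = ‖x.1‖ ^ p := by
      rw [← Real.rpow_add_one hSx.ne', show (p-2)/2+1 = p/2 from by ring, S1_eq_norm,
        ← Real.rpow_natCast ‖x.1‖ 2, ← Real.rpow_mul (norm_nonneg _)]
      norm_num
      rw [show (2:ℝ) * (p / 2) = p from by ring]
    rw [h2, show (m:ℝ) + 2*(k:ℝ) + 2 + 2*((p-2)/2) = (m:ℝ)+2*k+p from by ring, h3,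
      ← mul_assoc, inv_mul_cancel₀ hQp.ne', one_mul]
  · -- part (ii) boundary
    intro x hNR
    rw [hf x, hNR, sub_self, mul_zero]
  · -- part (ii) interior
    intro x hlt
    rw [hf x]
    have hNnn : 0 ≤ gaugeN x := by
      rw [hgN x]; exact Real.rpow_nonneg (uu_nonneg x) _
    have ha : 0 < 2 * p / (p - 1) := by positivity
    have hlt' : gaugeN x ^ (2*p/(p-1)) < R ^ (2*p/(p-1)) :=
      Real.rpow_lt_rpow hNnn hlt ha
    have hpos : (0:ℝ) < R ^ (2*p/(p-1)) - gaugeN x ^ (2*p/(p-1)) := by linarith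
    exact mul_pos hC hpos
  · -- part (iii)
    intro x hNR
    have hx0 : x ≠ 0 := by
      intro h0
      rw [h0] at hNR
      have hg0 : gaugeN (0 : Pt m k) = 0 := by
        rw [hgN 0]
        have hu0 : uu (0 : Pt m k) = 0 := by
          simp [uu, S1, S2]
        rw [hu0, Real.zero_rpow (by norm_num)]
      rw [hg0] at hNR
      exact hR.ne hNR
    have hU := uu_pos x hx0
    have huR : uu x = R ^ (4:ℕ) := by
      have h4 : (uu x ^ ((1:ℝ)/4)) ^ (4:ℕ) = uu x := by
        rw [← Real.rpow_natCast (uu x ^ ((1:ℝ)/4)) 4, ← Real.rpow_mul (uu_nonneg x)]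
        norm_num
      rw [← h4, ← hgN x, hNR]
    set W : ℝ := (m:ℝ) + 2*k + p with hWdef
    set c : ℝ := (R ^ 2 / W) ^ (1 / (p - 1)) with hcdef
    have hcnn : 0 ≤ c := by rw [hcdef]; positivity
    unfold hGradNorm
    rw [hf', hGradSq_g hJ Cc c1 e hU.ne']
    have hkey : (4*Cc*e) * (4*Cc*e) * (uu x ^ (e-1) * uu x ^ (e-1) * uu x) = c^2 := by
      have hTT : T * T = W ^ (2/(p-1)) := by
        rw [hTdef, ← Real.rpow_add hQp, show 1/(p-1) + 1/(p-1) = 2/(p-1) from by ring]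
      have hUU : uu x ^ (e-1) * uu x ^ (e-1) * uu x = uu x ^ (1/(p-1)) := by
        rw [← Real.rpow_add hU, ← Real.rpow_add_one hU.ne',
          show (e-1)+(e-1)+1 = 1/(p-1) from by rw [hedef]; field_simp; ring]
      have hc2 : c^2 = (R^2/W) ^ (2/(p-1)) := by
        rw [hcdef, sq, ← Real.rpow_add (by positivity : (0:ℝ) < R^2/W),
          show 1/(p-1) + 1/(p-1) = 2/(p-1) from by ring]
      have hRW : (R^2/W) ^ (2/(p-1)) = (R^2) ^ (2/(p-1)) / W ^ (2/(p-1)) :=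
        Real.div_rpow (by positivity) hQp.le _
      have hR4 : (uu x) ^ ((1:ℝ)/(p-1)) = (R^2) ^ (2/(p-1)) := by
        rw [huR, ← Real.rpow_natCast R 4, ← Real.rpow_natCast R 2,
          ← Real.rpow_mul hR.le, ← Real.rpow_mul hR.le]
        congr 1
        push_cast
        ring
      have hTinv : T⁻¹ * T⁻¹ = (W ^ (2/(p-1)))⁻¹ := by
        rw [← mul_inv, hTT]
      rw [hBval, hUU, hc2, hRW, hR4, hTinv, div_eq_mul_inv]
      ring
    have hsq : (4*Cc*e) * (4*Cc*e) * (uu x ^ (e-1) * uu x ^ (e-1) * (S1 x * uu x))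
        = (c * ‖x.1‖)^2 := by
      calc (4*Cc*e) * (4*Cc*e) * (uu x ^ (e-1) * uu x ^ (e-1) * (S1 x * uu x))
          = ((4*Cc*e) * (4*Cc*e) * (uu x ^ (e-1) * uu x ^ (e-1) * uu x)) * S1 x := by ring
        _ = c^2 * ‖x.1‖^2 := by rw [hkey, S1_eq_norm]
        _ = (c * ‖x.1‖)^2 := by ring
    rw [hsq, Real.sqrt_sq (mul_nonneg hcnn (norm_nonneg _))]

end
end
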